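/- arXiv:1301.4955 — 4 statements merged into one kernel-verified Lean document; each statement's English description precedes it below -/
import Mathlib

section
/- Let r be a distinguished vertex of a finite set V and let P be a partition of V \ {r} into non-empty parts. A map g : V → V with g(r) = r is the glue map of an r-rooted hypertree with vertex set V and Prüfer partition P if and only if g is constant on each part of P and for every v ∈ V there exists an integer k with g^k(v) = g^{k+1}(v) = r. -/
open Finset

/-- Degree of a vertex: number of hyperedges containing it. -/
def hdeg (E : Finset (Finset ℕ)) (v : ℕ) : ℕ := (E.filter (fun e => v ∈ e)).card

/-- Two vertices are adjacent if they are distinct and lie in a common hyperedge. -/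
def HAdj (E : Finset (Finset ℕ)) (v w : ℕ) : Prop := v ≠ w ∧ ∃ e ∈ E, v ∈ e ∧ w ∈ e

/-- A hypergraph is connected if any two vertices are joined by a path of
consecutively adjacent vertices. -/
def HConnected (V : Finset ℕ) (E : Finset (Finset ℕ)) : Prop :=
  ∀ v ∈ V, ∀ w ∈ V, Relation.ReflTransGen (HAdj E) v w

/-- A (finite) hypergraph on vertex set `V`: hyperedges are subsets of `V`
of cardinality at least 2. -/
def IsHypergraph (V : Finset ℕ) (E : Finset (Finset ℕ)) : Prop :=
  ∀ e ∈ E, e ⊆ V ∧ 2 ≤ e.card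

/-- A finite hypertree: a connected hypergraph with
`∑ size(e) = |V| + |E| - 1`. -/
def IsHypertree (V : Finset ℕ) (E : Finset (Finset ℕ)) : Prop :=
  IsHypergraph V E ∧ HConnected V E ∧ (∑ e ∈ E, e.card) + 1 = V.card + E.card

/-- There is a walk of length `l` from `v` to `w`. -/
def HJoined (E : Finset (Finset ℕ)) (l : ℕ) (v w : ℕ) : Prop :=
  ∃ p : ℕ → ℕ, p 0 = v ∧ p l = w ∧ ∀ i < l, HAdj E (p i) (p (i + 1))

/-- Distance between two vertices: length of a shortest joining path. -/
noncomputable def hdist (E : Finset (Finset ℕ)) (v w : ℕ) : ℕ :=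
  sInf {l | HJoined E l v w}

/-- `v` is the marked vertex of the hyperedge `e` of an `r`-rooted hypertree:
the vertex of `e` closest to the root `r`. -/
def IsMarked (E : Finset (Finset ℕ)) (r : ℕ) (e : Finset ℕ) (v : ℕ) : Prop :=
  v ∈ e ∧ ∀ w ∈ e, hdist E r v ≤ hdist E r w

/-- `P` is a partition of the finite set `S` into non-empty parts. -/
def IsPartitionOf (S : Finset ℕ) (P : Finset (Finset ℕ)) : Prop :=
  (∀ s ∈ P, s.Nonempty) ∧ (∀ s ∈ P, ∀ t ∈ P, s ≠ t → Disjoint s t) ∧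
    P.biUnion id = S

/-- `g` is the glue map of an `r`-rooted hypertree with vertex set `V` and
Prüfer partition `P`: there is a hypertree on `V` whose reduced hyperedges
are exactly the parts of `P` and such that `g` sends each element of a
reduced hyperedge to the marked vertex of the corresponding hyperedge. -/
def IsGlueMapOf (V : Finset ℕ) (r : ℕ) (P : Finset (Finset ℕ))
    (g : ℕ → ℕ) : Prop :=
  ∃ E : Finset (Finset ℕ), IsHypertree V E ∧
    ∃ m : Finset ℕ → ℕ, (∀ e ∈ E, IsMarked E r e (m e)) ∧
      P = E.image (fun e => e.erase (m e)) ∧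
      Set.InjOn (fun e : Finset ℕ => e.erase (m e)) ↑E ∧
      ∀ e ∈ E, ∀ v ∈ e.erase (m e), g v = m e

lemma hadj_symm {E : Finset (Finset ℕ)} {v w : ℕ} (h : HAdj E v w) : HAdj E w v := by
  obtain ⟨hne, e, he, hv, hw⟩ := h
  exact ⟨hne.symm, e, he, hw, hv⟩

lemma hjoined_self (E : Finset (Finset ℕ)) (a : ℕ) : HJoined E 0 a a :=
  ⟨fun _ => a, rfl, rfl, fun i hi => absurd hi (by omega)⟩

lemma hjoined_zero {E : Finset (Finset ℕ)} {a b : ℕ} (h : HJoined E 0 a b) : a = b := by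
  obtain ⟨p, h0, hl, _⟩ := h
  rw [← h0, hl]

lemma hjoined_succ {E : Finset (Finset ℕ)} {l a b c : ℕ} (h : HJoined E l a b)
    (hbc : HAdj E b c) : HJoined E (l + 1) a c := by
  obtain ⟨p, hp0, hpl, hadj⟩ := h
  refine ⟨fun i => if i ≤ l then p i else c, by simp [hp0], by simp, ?_⟩
  intro i hi
  rcases lt_or_eq_of_le (Nat.lt_succ_iff.mp hi) with hil | hil
  · simpa [hil.le, Nat.succ_le_of_lt hil] using hadj i hil
  · subst hil
    simpa [hpl] using hbc

lemma rtg_joined {E : Finset (Finset ℕ)} {a b : ℕ}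
    (h : Relation.ReflTransGen (HAdj E) a b) : ∃ l, HJoined E l a b := by
  induction h with
  | refl => exact ⟨0, hjoined_self E a⟩
  | tail _ hbc ih => obtain ⟨l, hl⟩ := ih; exact ⟨l + 1, hjoined_succ hl hbc⟩

lemma joined_rtg {E : Finset (Finset ℕ)} {l a b : ℕ} (h : HJoined E l a b) :
    Relation.ReflTransGen (HAdj E) a b := by
  induction l generalizing b with
  | zero => rw [hjoined_zero h]
  | succ l ih =>
    obtain ⟨p, hp0, hpl, hadj⟩ := h
    exact Relation.ReflTransGen.tail (ih ⟨p, hp0, rfl, fun i hi => hadj i (by omega)⟩)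
      (hpl ▸ hadj l (by omega))

lemma hdist_self (E : Finset (Finset ℕ)) (a : ℕ) : hdist E a a = 0 :=
  Nat.le_zero.mp (Nat.sInf_le (hjoined_self E a))

lemma hdist_spec {E : Finset (Finset ℕ)} {a b : ℕ} (h : ∃ l, HJoined E l a b) :
    HJoined E (hdist E a b) a b := Nat.sInf_mem h

lemma hdist_eq_zero {E : Finset (Finset ℕ)} {a b : ℕ} (h : ∃ l, HJoined E l a b)
    (h0 : hdist E a b = 0) : a = b := hjoined_zero (h0 ▸ hdist_spec h)

lemma glue_strict {V : Finset ℕ} {E : Finset (Finset ℕ)} {r : ℕ} {m : Finset ℕ → ℕ}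
    (hHG : IsHypergraph V E) (hconn : HConnected V E)
    (hcount : (∑ e ∈ E, e.card) + 1 = V.card + E.card) (hr : r ∈ V)
    (hm : ∀ e ∈ E, IsMarked E r e (m e)) :
    ∀ e ∈ E, ∀ w ∈ e.erase (m e), hdist E r (m e) < hdist E r w := by
  classical
  set d : ℕ → ℕ := hdist E r with hd
  have hjoin : ∀ v ∈ V, HJoined E (d v) r v := fun v hv =>
    hdist_spec (rtg_joined (hconn r hr v hv))
  have hzero : ∀ v ∈ V, d v = 0 → v = r := fun v hv h0 =>
    (hdist_eq_zero (rtg_joined (hconn r hr v hv)) h0).symm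
  have hdr : d r = 0 := hdist_self E r
  -- predecessor edge
  have hpred : ∀ v ∈ V, v ≠ r → ∃ e ∈ E, v ∈ e ∧ ∃ u ∈ e, d u < d v := by
    intro v hv hvr
    obtain ⟨p, hp0, hpl, hadj⟩ := hjoin v hv
    have hlpos : d v ≠ 0 := fun h0 => hvr (hzero v hv h0)
    have hstep : HAdj E (p (d v - 1)) (p (d v - 1 + 1)) := hadj _ (by omega)
    rw [show d v - 1 + 1 = d v by omega, hpl] at hstep
    obtain ⟨hne, e, he, hu, hve⟩ := hstep
    refine ⟨e, he, hve, p (d v - 1), hu, ?_⟩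
    have : HJoined E (d v - 1) r (p (d v - 1)) :=
      ⟨p, hp0, rfl, fun i hi => hadj i (by omega)⟩
    have h7 : d (p (d v - 1)) ≤ d v - 1 := Nat.sInf_le this
    omega
  have hchoice : ∀ v : ℕ, ∃ e : Finset ℕ,
      v ∈ V → v ≠ r → e ∈ E ∧ v ∈ e ∧ ∃ u ∈ e, d u < d v := by
    intro v
    by_cases hv : v ∈ V ∧ v ≠ r
    · obtain ⟨e, he, h1, h2⟩ := hpred v hv.1 hv.2
      exact ⟨e, fun _ _ => ⟨he, h1, h2⟩⟩
    · exact ⟨∅, fun h1 h2 => absurd ⟨h1, h2⟩ hv⟩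
  choose ev hev_spec using hchoice
  replace hev_spec : ∀ v ∈ V, v ≠ r → ev v ∈ E ∧ v ∈ ev v ∧ ∃ u ∈ ev v, d u < d v :=
    fun v hv hvr => hev_spec v hv hvr
  -- r not in reduced edges
  have hrnot : ∀ e ∈ E, r ∉ e.erase (m e) := by
    intro e he hcon
    have hre : r ∈ e := mem_of_mem_erase hcon
    have h1 : d (m e) ≤ d r := (hm e he).2 r hre
    have h2 : m e = r := hzero (m e) ((hHG e he).1 (hm e he).1) (by omega)
    exact (mem_erase.mp hcon).1 h2.symm
  -- counting
  set T : Finset ((_ : Finset ℕ) × ℕ) := E.sigma (fun e => e.erase (m e)) with hT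
  have hTcard : T.card + E.card = ∑ e ∈ E, e.card := by
    rw [hT, Finset.card_sigma]
    have h2 : ∀ e ∈ E, (e.erase (m e)).card + 1 = e.card := by
      intro e he
      rw [card_erase_of_mem (hm e he).1]
      have := (hHG e he).2
      omega
    calc (∑ e ∈ E, (e.erase (m e)).card) + E.card
        = ∑ e ∈ E, ((e.erase (m e)).card + 1) := by
          rw [Finset.sum_add_distrib, Finset.sum_const, smul_eq_mul, mul_one]
      _ = ∑ e ∈ E, e.card := Finset.sum_congr rfl h2
  have hDcard : (V.erase r).card + 1 = V.card := by
    rw [card_erase_of_mem hr]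
    have : 0 < V.card := card_pos.mpr ⟨r, hr⟩
    omega
  have hcards : T.card ≤ (V.erase r).card := by omega
  have hmapsto : ∀ v ∈ V.erase r, (⟨ev v, v⟩ : (_ : Finset ℕ) × ℕ) ∈ T := by
    intro v hv
    obtain ⟨hvr, hvV⟩ := mem_erase.mp hv
    obtain ⟨heE, hve, u, hu, hdu⟩ := hev_spec v hvV hvr
    have hvmem : v ∈ (ev v).erase (m (ev v)) := by
      refine mem_erase.mpr ⟨?_, hve⟩
      intro hvm
      have h5 : d (m (ev v)) ≤ d u := (hm (ev v) heE).2 u hu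
      rw [← hvm] at h5
      omega
    exact Finset.mem_sigma.mpr ⟨heE, hvmem⟩
  have hsurj := Finset.surj_on_of_inj_on_of_card_le
    (s := V.erase r) (t := T) (fun v _ => (⟨ev v, v⟩ : (_ : Finset ℕ) × ℕ))
    hmapsto (fun a b ha hb hab => by simpa using (Sigma.mk.inj_iff.mp hab).2) hcards
  intro e he w hw
  have hwT : (⟨e, w⟩ : (_ : Finset ℕ) × ℕ) ∈ T := by
    rw [hT, Finset.mem_sigma]; exact ⟨he, hw⟩
  obtain ⟨v, hvD, heq⟩ := hsurj ⟨e, w⟩ hwT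
  obtain ⟨h1, h2⟩ := Sigma.mk.inj_iff.mp heq
  have hwv : w = v := by simpa using h2
  subst hwv
  have hevw : ev w = e := h1.symm
  obtain ⟨hvr, hvV⟩ := mem_erase.mp hvD
  obtain ⟨heE, hve, u, hu, hdu⟩ := hev_spec w hvV hvr
  rw [hevw] at hu
  have h6 : d (m e) ≤ d u := (hm e he).2 u hu
  omega

/-- a map `g : V → V` fixing the root `r` is the glue map of an
`r`-rooted hypertree with vertex set `V` and Prüfer partition `P` if and only
if `g` is constant on each part of `P` and every vertex reaches `r` under
iteration of `g`. -/
theorem stmt11 (V : Finset ℕ) (r : ℕ) (hr : r ∈ V)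
    (P : Finset (Finset ℕ)) (hP : IsPartitionOf (V.erase r) P)
    (g : ℕ → ℕ) (hgr : g r = r) (hgV : ∀ v ∈ V, g v ∈ V) :
    IsGlueMapOf V r P g ↔
      ((∀ s ∈ P, ∀ v ∈ s, ∀ w ∈ s, g v = g w) ∧
       ∀ v ∈ V, ∃ k : ℕ, g^[k] v = r ∧ g^[k + 1] v = r) := by
  classical
  obtain ⟨hPne, hPdisj, hPun⟩ := hP
  have hfind : ∀ v ∈ V.erase r, ∃ s ∈ P, v ∈ s := by
    intro v hv
    rw [← hPun] at hv
    simpa using mem_biUnion.mp hv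
  constructor
  · rintro ⟨E, ⟨hHG, hconn, hcount⟩, m, hm, hPeq, hinj, hglue⟩
    refine ⟨?_, ?_⟩
    · intro s hs v hv w hw
      rw [hPeq] at hs
      obtain ⟨e, he, rfl⟩ := mem_image.mp hs
      rw [hglue e he v hv, hglue e he w hw]
    · have key := glue_strict hHG hconn hcount hr hm
      have main : ∀ n, ∀ v ∈ V, hdist E r v ≤ n → ∃ k, g^[k] v = r := by
        intro n
        induction n with
        | zero =>
          intro v hv h0
          have hrv : r = v :=
            hdist_eq_zero (rtg_joined (hconn r hr v hv)) (Nat.le_zero.mp h0)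
          exact ⟨0, hrv.symm⟩
        | succ n ih =>
          intro v hv hn
          by_cases hvr : v = r
          · exact ⟨0, hvr⟩
          · obtain ⟨s, hs, hvs⟩ := hfind v (mem_erase.mpr ⟨hvr, hv⟩)
            rw [hPeq] at hs
            obtain ⟨e, he, rfl⟩ := mem_image.mp hs
            have hgv : g v = m e := hglue e he v hvs
            have hlt : hdist E r (m e) < hdist E r v := key e he v hvs
            have hmV : m e ∈ V := (hHG e he).1 (hm e he).1
            obtain ⟨k, hk⟩ := ih (m e) hmV (by omega)
            exact ⟨k + 1, by rw [Function.iterate_succ_apply, hgv, hk]⟩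
      intro v hv
      obtain ⟨k, hk⟩ := main (hdist E r v) v hv le_rfl
      exact ⟨k, hk, by rw [Function.iterate_succ_apply', hk, hgr]⟩
  · rintro ⟨hconst, hreach⟩
    have hR : ∀ v ∈ V, ∃ k, g^[k] v = r := fun v hv => (hreach v hv).imp (fun k hk => hk.1)
    set h : ℕ → ℕ := fun v => sInf {k | g^[k] v = r} with hhdef
    have hmem : ∀ v, (∃ k, g^[k] v = r) → g^[h v] v = r := fun v hv => Nat.sInf_mem hv
    have hzero : ∀ v, (∃ k, g^[k] v = r) → h v = 0 → v = r := by
      intro v hv h0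
      have := hmem v hv
      rwa [h0, Function.iterate_zero_apply] at this
    have hrzero : h r = 0 :=
      Nat.le_zero.mp (Nat.sInf_le (show g^[0] r = r from rfl))
    have hRg : ∀ v, (∃ k, g^[k] v = r) → v ≠ r → ∃ k, g^[k] (g v) = r := by
      intro v hv hvr
      refine ⟨h v - 1, ?_⟩
      have h1 : g^[h v] v = r := hmem v hv
      have hpos : h v ≠ 0 := fun h0 => hvr (hzero v hv h0)
      rw [← Function.iterate_succ_apply, Nat.succ_eq_add_one,
        show h v - 1 + 1 = h v by omega]
      exact h1
    have hsucc : ∀ v, (∃ k, g^[k] v = r) → v ≠ r → h v = h (g v) + 1 := by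
      intro v hv hvr
      have h1 : g^[h v] v = r := hmem v hv
      have hpos : h v ≠ 0 := fun h0 => hvr (hzero v hv h0)
      have hA : h (g v) ≤ h v - 1 := Nat.sInf_le (by
        show g^[h v - 1] (g v) = r
        rw [← Function.iterate_succ_apply, Nat.succ_eq_add_one,
          show h v - 1 + 1 = h v by omega]
        exact h1)
      have hB : h v ≤ h (g v) + 1 := Nat.sInf_le (by
        show g^[h (g v) + 1] v = r
        rw [Function.iterate_succ_apply]
        exact hmem (g v) (hRg v hv hvr))
      omega
    have hsubV : ∀ s ∈ P, s ⊆ V.erase r := fun s hs => hPun ▸ subset_biUnion_of_mem id hs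
    set c : Finset ℕ → ℕ := fun s => g (if hs : s.Nonempty then hs.choose else 0) with hcdef
    have hc : ∀ s ∈ P, ∀ v ∈ s, g v = c s := by
      intro s hs v hv
      have hne : s.Nonempty := hPne s hs
      simp only [hcdef, dif_pos hne]
      exact hconst s hs v hv hne.choose hne.choose_spec
    have hcV : ∀ s ∈ P, c s ∈ V := by
      intro s hs
      obtain ⟨x, hx⟩ := hPne s hs
      rw [← hc s hs x hx]
      exact hgV x (mem_of_mem_erase (hsubV s hs hx))
    have hcns : ∀ s ∈ P, c s ∉ s := by
      intro s hs hcs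
      have h1 : g (c s) = c s := hc s hs _ hcs
      have h2 : ∀ k, g^[k] (c s) = c s := by
        intro k
        induction k with
        | zero => rfl
        | succ k ih => rw [Function.iterate_succ_apply', ih, h1]
      have h3 : c s ≠ r := (mem_erase.mp (hsubV s hs hcs)).1
      obtain ⟨k, hk⟩ := hR (c s) (hcV s hs)
      rw [h2 k] at hk
      exact h3 hk
    have hstep : ∀ s ∈ P, ∀ v ∈ s, h v = h (c s) + 1 := by
      intro s hs v hv
      have hvV : v ∈ V.erase r := hsubV s hs hv
      have := hsucc v (hR v (mem_of_mem_erase hvV)) (mem_erase.mp hvV).1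
      rwa [hc s hs v hv] at this
    set E : Finset (Finset ℕ) := P.image (fun s => insert (c s) s) with hEdef
    have hmemE : ∀ e ∈ E, ∃ s ∈ P, e = insert (c s) s := by
      intro e he
      obtain ⟨s, hs, hse⟩ := mem_image.mp he
      exact ⟨s, hs, hse.symm⟩
    have hadj_h : ∀ v w, HAdj E v w → h w ≤ h v + 1 := by
      rintro v w ⟨hvw, e, he, hve, hwe⟩
      obtain ⟨s, hs, rfl⟩ := hmemE e he
      rcases mem_insert.mp hve with hv | hv <;> rcases mem_insert.mp hwe with hw | hw
      · exact absurd (hv.trans hw.symm) hvw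
      · subst hv
        rw [hstep s hs w hw]
      · subst hw
        rw [hstep s hs v hv]
        omega
      · rw [hstep s hs v hv, hstep s hs w hw]
        omega
    have hlow : ∀ l (p : ℕ → ℕ), p 0 = r → (∀ i < l, HAdj E (p i) (p (i + 1))) →
        h (p l) ≤ l := by
      intro l
      induction l with
      | zero => intro p h0 _; rw [h0, hrzero]
      | succ l ih =>
        intro p h0 hadj
        have h1 := ih p h0 (fun i hi => hadj i (by omega))
        have h2 := hadj_h _ _ (hadj l (by omega))
        omega
    have hup : ∀ n, ∀ v ∈ V, h v ≤ n → HJoined E (h v) r v := by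
      intro n
      induction n with
      | zero =>
        intro v hv h0
        have h1 : h v = 0 := by omega
        have hvr : v = r := hzero v (hR v hv) h1
        rw [h1, hvr]
        exact hjoined_self E r
      | succ n ih =>
        intro v hv hn
        by_cases hvr : v = r
        · rw [hvr, hrzero]
          exact hjoined_self E r
        · obtain ⟨s, hs, hvs⟩ := hfind v (mem_erase.mpr ⟨hvr, hv⟩)
          have hhv : h v = h (c s) + 1 := hstep s hs v hvs
          have hj : HJoined E (h (c s)) r (c s) := ih (c s) (hcV s hs) (by omega)
          have hadjcv : HAdj E (c s) v :=
            ⟨fun hh => hcns s hs (hh ▸ hvs), insert (c s) s,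
              mem_image_of_mem _ hs, mem_insert_self _ _, mem_insert_of_mem hvs⟩
          rw [hhv]
          exact hjoined_succ hj hadjcv
    have hdist_eq : ∀ v ∈ V, hdist E r v = h v := by
      intro v hv
      have h1 : HJoined E (h v) r v := hup (h v) v hv le_rfl
      refine le_antisymm (Nat.sInf_le h1) ?_
      obtain ⟨p, hp0, hpl, hadj⟩ := hdist_spec ⟨h v, h1⟩
      have := hlow _ p hp0 hadj
      rwa [hpl] at this
    set m : Finset ℕ → ℕ := fun e =>
      g (if he : ∃ b ∈ e, ∀ b' ∈ e, h b' ≤ h b then he.choose else 0) with hmdef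
    have hmE : ∀ s ∈ P, m (insert (c s) s) = c s := by
      intro s hs
      have hex : ∃ b ∈ insert (c s) s, ∀ b' ∈ insert (c s) s, h b' ≤ h b :=
        Finset.exists_max_image _ h ⟨c s, mem_insert_self _ _⟩
      simp only [hmdef, dif_pos hex]
      obtain ⟨hb, hmax⟩ := hex.choose_spec
      obtain ⟨x, hx⟩ := hPne s hs
      have hbs : hex.choose ∈ s := by
        rcases mem_insert.mp hb with hbc | hbs
        · exfalso
          have h1 := hmax x (mem_insert_of_mem hx)
          rw [hbc] at h1
          have h2 := hstep s hs x hx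
          omega
        · exact hbs
      exact hc s hs _ hbs
    have herase : ∀ s ∈ P, (insert (c s) s).erase (m (insert (c s) s)) = s := by
      intro s hs
      rw [hmE s hs]
      exact erase_insert (hcns s hs)
    have hPeq : P = E.image (fun e => e.erase (m e)) := by
      rw [hEdef, image_image]
      exact ((Finset.image_congr (fun s hs => herase s hs)).trans Finset.image_id).symm
    have hcardPE : E.card = P.card := by
      have h1 : E.card ≤ P.card := hEdef ▸ card_image_le
      have h2 : P.card ≤ E.card := by
        rw [hPeq]
        exact card_image_le
      omega
    have hinjc : Set.InjOn (fun s => insert (c s) s) ↑P := by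
      rw [← Finset.card_image_iff]
      rw [← hEdef, hcardPE]
    refine ⟨E, ⟨?_, ?_, ?_⟩, m, ?_, hPeq, ?_, ?_⟩
    · -- IsHypergraph
      intro e he
      obtain ⟨s, hs, rfl⟩ := hmemE e he
      constructor
      · exact insert_subset (hcV s hs)
          ((hsubV s hs).trans (fun x hx => mem_of_mem_erase hx))
      · rw [card_insert_of_notMem (hcns s hs)]
        have := (hPne s hs).card_pos
        omega
    · -- HConnected
      have hto : ∀ v ∈ V, Relation.ReflTransGen (HAdj E) r v := by
        intro v hv
        exact joined_rtg (hup (h v) v hv le_rfl)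
      intro v hv w hw
      have hsym : Symmetric (HAdj E) := fun a b hab => hadj_symm hab
      exact Relation.ReflTransGen.trans
        ((@Relation.ReflTransGen.symmetric _ _ ⟨hsym⟩).symm _ _ (hto v hv)) (hto w hw)
    · -- count
      have hsumE : ∑ e ∈ E, e.card = ∑ s ∈ P, (insert (c s) s).card := by
        rw [hEdef]
        exact Finset.sum_image (fun x hx y hy hxy => hinjc hx hy hxy)
      have hsumP : ∑ s ∈ P, (insert (c s) s).card = (∑ s ∈ P, s.card) + P.card := by
        calc ∑ s ∈ P, (insert (c s) s).card = ∑ s ∈ P, (s.card + 1) :=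
              Finset.sum_congr rfl (fun s hs => card_insert_of_notMem (hcns s hs))
          _ = (∑ s ∈ P, s.card) + P.card := by
              rw [Finset.sum_add_distrib, Finset.sum_const, smul_eq_mul, mul_one]
      have hbiu : ∑ s ∈ P, s.card = (V.erase r).card := by
        rw [← hPun]
        exact (Finset.card_biUnion (fun x hx y hy hxy => hPdisj x hx y hy hxy)).symm
      have hVc : (V.erase r).card + 1 = V.card := by
        rw [card_erase_of_mem hr]
        have : 0 < V.card := card_pos.mpr ⟨r, hr⟩
        omega
      omega
    · -- marked
      intro e he
      obtain ⟨s, hs, rfl⟩ := hmemE e he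
      rw [hmE s hs]
      refine ⟨mem_insert_self _ _, ?_⟩
      intro w hw
      have hwV : w ∈ V := by
        rcases mem_insert.mp hw with h1 | h1
        · exact h1 ▸ hcV s hs
        · exact mem_of_mem_erase (hsubV s hs h1)
      rw [hdist_eq _ (hcV s hs), hdist_eq _ hwV]
      rcases mem_insert.mp hw with h1 | h1
      · rw [h1]
      · rw [hstep s hs w h1]
        omega
    · -- InjOn erase
      intro e₁ h₁ e₂ h₂ heq
      simp only [Finset.mem_coe] at h₁ h₂
      obtain ⟨s₁, hs₁, rfl⟩ := hmemE e₁ h₁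
      obtain ⟨s₂, hs₂, rfl⟩ := hmemE e₂ h₂
      simp only [herase s₁ hs₁, herase s₂ hs₂] at heq
      rw [heq]
    · -- glue
      intro e he v hv
      obtain ⟨s, hs, rfl⟩ := hmemE e he
      rw [herase s hs] at hv
      rw [hc s hs v hv, hmE s hs]
end

section
/- Let T be a non-trivial finite rooted hypertree with vertex set V, root r, and hyperedge set E, and let e be a hyperedge of T with reduced hyperedge e'. Then E \ {e} is the hyperedge set of an r-rooted hypertree with vertex set V \ e' if and only if e is of leaf-type. -/
open Finset

/-- for a non-trivial finite rooted hypertree and a hyperedge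
`e` with marked vertex `v`, removing `e` yields an `r`-rooted hypertree on
`V \ e'` if and only if `e` is of leaf-type. -/
theorem stmt14 (V : Finset ℕ) (E : Finset (Finset ℕ)) (r : ℕ)
    (hT : IsHypertree V E) (hr : r ∈ V) (hnt : 2 ≤ E.card)
    (e : Finset ℕ) (he : e ∈ E) (v : ℕ) (hv : IsMarked E r e v) :
    IsHypertree (V \ e.erase v) (E.erase e) ↔
      ∀ w ∈ e.erase v, hdeg E w = 1 := by

  obtain ⟨hHG, hConn, hCount⟩ := hT
  obtain ⟨hve, -⟩ := hv
  have heV : e ⊆ V := (hHG e he).1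
  constructor
  · rintro ⟨hHG', -, -⟩ w hw
    have hwe : w ∈ e := mem_of_mem_erase hw
    unfold hdeg
    have hfilt : E.filter (fun f => w ∈ f) = {e} := by
      apply Finset.eq_singleton_iff_unique_mem.mpr
      refine ⟨mem_filter.mpr ⟨he, hwe⟩, ?_⟩
      intro f hf
      simp only [mem_filter] at hf
      by_contra hfe
      have hf' : f ∈ E.erase e := mem_erase.mpr ⟨hfe, hf.1⟩
      have := (hHG' f hf').1 hf.2
      rw [mem_sdiff] at this
      exact this.2 hw
    rw [hfilt]; simp
  · intro hleaf
    have huniq : ∀ w ∈ e.erase v, ∀ f ∈ E, w ∈ f → f = e := by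
      intro w hw f hf hwf
      have h1 := hleaf w hw
      unfold hdeg at h1
      have hfm : f ∈ E.filter (fun g => w ∈ g) := mem_filter.mpr ⟨hf, hwf⟩
      have hem : e ∈ E.filter (fun g => w ∈ g) :=
        mem_filter.mpr ⟨he, mem_of_mem_erase hw⟩
      by_contra hne
      have : 1 < (E.filter (fun g => w ∈ g)).card :=
        Finset.one_lt_card.mpr ⟨f, hfm, e, hem, hne⟩
      omega
    refine ⟨?_, ?_, ?_⟩
    · intro f hf
      obtain ⟨hfe, hfE⟩ := mem_erase.mp hf
      refine ⟨?_, (hHG f hfE).2⟩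
      intro x hx
      refine mem_sdiff.mpr ⟨(hHG f hfE).1 hx, ?_⟩
      intro hxe
      exact hfe (huniq x hxe f hfE hx)
    · -- connectivity
      intro x hx y hy
      set g : ℕ → ℕ := fun x => if x ∈ e.erase v then v else x with hg
      have key : ∀ a b, HAdj E a b →
          Relation.ReflTransGen (HAdj (E.erase e)) (g a) (g b) := by
        rintro a b ⟨hab, f, hfE, haf, hbf⟩
        by_cases ha : a ∈ e.erase v <;> by_cases hb : b ∈ e.erase v
        · simp only [hg, if_pos ha, if_pos hb]
          exact Relation.ReflTransGen.refl
        · have hfeq : f = e := huniq a ha f hfE haf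
          have hbv : b = v := by
            by_contra h
            exact hb (mem_erase.mpr ⟨h, hfeq ▸ hbf⟩)
          simp only [hg, if_pos ha, if_neg hb, hbv,
            if_neg (Finset.notMem_erase v e)]
          exact Relation.ReflTransGen.refl
        · have hfeq : f = e := huniq b hb f hfE hbf
          have hav : a = v := by
            by_contra h
            exact ha (mem_erase.mpr ⟨h, hfeq ▸ haf⟩)
          simp only [hg, if_neg ha, if_pos hb, hav,
            if_neg (Finset.notMem_erase v e)]
          exact Relation.ReflTransGen.refl
        · have hfne : f ≠ e := by
            intro hfeq
            subst hfeq
            have hav : a = v := by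
              by_contra h; exact ha (mem_erase.mpr ⟨h, haf⟩)
            have hbv : b = v := by
              by_contra h; exact hb (mem_erase.mpr ⟨h, hbf⟩)
            exact hab (hav.trans hbv.symm)
          simp only [hg, if_neg ha, if_neg hb]
          exact Relation.ReflTransGen.single
            ⟨hab, f, mem_erase.mpr ⟨hfne, hfE⟩, haf, hbf⟩
      rw [mem_sdiff] at hx hy
      have : Relation.ReflTransGen (HAdj (E.erase e)) (g x) (g y) :=
        Relation.ReflTransGen.lift' g key _ _ (hConn x hx.1 y hy.1)
      simpa only [hg, if_neg hx.2, if_neg hy.2] using this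
    · -- counting
      have hsum : ∑ f ∈ E.erase e, f.card + e.card = ∑ f ∈ E, f.card :=
        Finset.sum_erase_add E _ he
      have hEc : (E.erase e).card = E.card - 1 := Finset.card_erase_of_mem he
      have hec : (e.erase v).card = e.card - 1 := Finset.card_erase_of_mem hve
      have heS : e.erase v ⊆ V := (Finset.erase_subset v e).trans heV
      have hVc : (V \ e.erase v).card = V.card - (e.erase v).card :=
        Finset.card_sdiff_of_subset heS
      have h2 : 2 ≤ e.card := (hHG e he).2
      have h3 : (e.erase v).card ≤ V.card := Finset.card_le_card heS
      have h4 : 1 ≤ E.card := Finset.card_pos.mpr ⟨e, he⟩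
      omega
end

section
/- Let P be a partition of a subset of {1, ..., n-1} into k non-empty parts and let W be a word of length k over the alphabet {1, ..., n} whose last letter is n. Then at least one part of P is of leaf-type with respect to the first k-1 letters of W, i.e., some part contains no letter occurring in W. -/
open Finset

/-- if `P` is a partition of a subset of `{1, …, n-1}` into `k`
non-empty parts and `W` is a word of length `k` over `{1, …, n}` whose last
letter is `n`, then some part of `P` contains no letter occurring among the
first `k - 1` letters of `W`. -/
theorem stmt16 (n k : ℕ) (P : Finset (Finset ℕ))
    (hparts : ∀ s ∈ P, s.Nonempty ∧ s ⊆ Finset.Icc 1 (n - 1))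
    (hdisj : ∀ s ∈ P, ∀ t ∈ P, s ≠ t → Disjoint s t)
    (hk : P.card = k)
    (W : List ℕ) (hW : W.length = k) (hWmem : ∀ w ∈ W, w ∈ Finset.Icc 1 n)
    (hWlast : W.getLast? = some n) :
    ∃ s ∈ P, ∀ x ∈ s, x ∉ W.take (k - 1) := by
  have hWne : W ≠ [] := by
    intro h; rw [h] at hWlast; simp at hWlast
  have hk1 : 1 ≤ k := by
    rw [← hW]; exact List.length_pos_iff.mpr hWne
  by_contra hcon
  push_neg at hcon
  -- hcon : ∀ s ∈ P, ∃ x ∈ s, x ∈ W.take (k-1)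
  choose f hf1 hf2 using hcon
  set g : Finset ℕ → ℕ := fun s => if hs : s ∈ P then f s hs else 0 with hg
  have hmaps : ∀ s ∈ P, g s ∈ (W.take (k - 1)).toFinset := by
    intro s hs
    simp only [hg, dif_pos hs]
    exact List.mem_toFinset.mpr (hf2 s hs)
  have hinj : Set.InjOn g P := by
    intro s hs t ht hst
    simp only [Finset.mem_coe] at hs ht
    by_contra hne
    have hd := hdisj s hs t ht hne
    have h1 : g s ∈ s := by simp only [hg, dif_pos hs]; exact hf1 s hs
    have h2 : g t ∈ t := by simp only [hg, dif_pos ht]; exact hf1 t ht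
    rw [hst] at h1
    exact Finset.disjoint_left.mp hd h1 h2
  have hcard := Finset.card_le_card_of_injOn g hmaps hinj
  have hle : (W.take (k - 1)).toFinset.card ≤ k - 1 := by
    calc (W.take (k - 1)).toFinset.card ≤ (W.take (k - 1)).length :=
          (W.take (k - 1)).toFinset_card_le
      _ ≤ k - 1 := by simp [List.length_take]
  omega
end

section
/- Fix a finite vertex set V = V' ∪ {r} and a partition P of V' into k non-empty parts. The generating function identity ∑_T ∏_{v ∈ V} x_v^{deg_T(v) - 1} = (∑_{v ∈ V} x_v)^{k-1} holds, where the sum on the left ranges over all r-rooted hypertrees T with vertex set V and Prüfer partition P. -/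
open Finset

/-- The hypertree `E` is `r`-rooted with vertex set `V` and has Prüfer
partition `P` (given by its reduced hyperedges). -/
def HasPruferPartition (V : Finset ℕ) (r : ℕ) (E : Finset (Finset ℕ))
    (P : Finset (Finset ℕ)) : Prop :=
  IsHypertree V E ∧ ∃ m : Finset ℕ → ℕ, (∀ e ∈ E, IsMarked E r e (m e)) ∧
    P = E.image (fun e => e.erase (m e)) ∧
    Set.InjOn (fun e : Finset ℕ => e.erase (m e)) ↑E

/-! ### Auxiliary development -/

open scoped Classical

namespace PT

/-! #### Walks and distances -/

theorem hadj_symm {E : Finset (Finset ℕ)} {v w : ℕ} (h : HAdj E v w) : HAdj E w v := by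
  obtain ⟨hne, e, he, hv, hw⟩ := h
  exact ⟨hne.symm, e, he, hw, hv⟩

theorem hjoined_refl (E : Finset (Finset ℕ)) (v : ℕ) : HJoined E 0 v v :=
  ⟨fun _ => v, rfl, rfl, by omega⟩

theorem hjoined_zero {E : Finset (Finset ℕ)} {v w : ℕ} (h : HJoined E 0 v w) : v = w := by
  obtain ⟨p, h0, hl, _⟩ := h; rw [← h0, hl]

theorem hjoined_succ {E : Finset (Finset ℕ)} {l : ℕ} {v w u : ℕ}
    (h : HJoined E l v w) (ha : HAdj E w u) : HJoined E (l + 1) v u := by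
  obtain ⟨p, h0, hl, hs⟩ := h
  refine ⟨fun i => if i = l + 1 then u else p i, by simp [h0], by simp, fun i hi => ?_⟩
  rcases Nat.lt_succ_iff_lt_or_eq.mp hi with hi | hi
  · simp only [if_neg (show i ≠ l + 1 by omega), if_neg (show i + 1 ≠ l + 1 by omega)]
    exact hs i hi
  · subst hi
    simp only [show i ≠ i + 1 from by omega, if_neg, if_pos, hl, reduceIte]
    simpa [hl] using ha

theorem hjoined_succ_iff {E : Finset (Finset ℕ)} {l : ℕ} {v w : ℕ}
    (h : HJoined E (l + 1) v w) : ∃ u, HJoined E l v u ∧ HAdj E u w := by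
  obtain ⟨p, h0, hl, hs⟩ := h
  refine ⟨p l, ⟨p, h0, rfl, fun i hi => hs i (by omega)⟩, ?_⟩
  have := hs l (by omega)
  rwa [hl] at this

theorem hjoined_of_rtg {E : Finset (Finset ℕ)} {v w : ℕ}
    (h : Relation.ReflTransGen (HAdj E) v w) : ∃ l, HJoined E l v w := by
  induction h with
  | refl => exact ⟨0, hjoined_refl E v⟩
  | tail _ hab ih => obtain ⟨l, hl⟩ := ih; exact ⟨l + 1, hjoined_succ hl hab⟩

theorem rtg_of_hjoined {E : Finset (Finset ℕ)} {l : ℕ} {v w : ℕ}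
    (h : HJoined E l v w) : Relation.ReflTransGen (HAdj E) v w := by
  induction l generalizing w with
  | zero => rw [hjoined_zero h]
  | succ l ih =>
    obtain ⟨u, h1, h2⟩ := hjoined_succ_iff h
    exact (ih h1).tail h2

theorem hdist_le {E : Finset (Finset ℕ)} {l : ℕ} {v w : ℕ} (h : HJoined E l v w) :
    hdist E v w ≤ l := Nat.sInf_le h

theorem hjoined_hdist {E : Finset (Finset ℕ)} {v w : ℕ} (h : ∃ l, HJoined E l v w) :
    HJoined E (hdist E v w) v w := Nat.sInf_mem h

theorem hdist_self (E : Finset (Finset ℕ)) (v : ℕ) : hdist E v v = 0 :=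
  Nat.le_zero.mp (hdist_le (hjoined_refl E v))

theorem eq_of_hdist_zero {E : Finset (Finset ℕ)} {v w : ℕ} (h : ∃ l, HJoined E l v w)
    (h0 : hdist E v w = 0) : v = w := by
  have := hjoined_hdist h; rw [h0] at this; exact hjoined_zero this

/-- Lower bound on distance via a Lipschitz potential. -/
theorem le_of_lipschitz {E : Finset (Finset ℕ)} {D : ℕ → ℕ}
    (hD : ∀ a b, HAdj E a b → D b ≤ D a + 1) :
    ∀ l v w, HJoined E l v w → D w ≤ D v + l := by
  intro l
  induction l with
  | zero => intro v w h; rw [hjoined_zero h]; simp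
  | succ l ih =>
    intro v w h
    obtain ⟨u, h1, h2⟩ := hjoined_succ_iff h
    have := hD u w h2
    have := ih v u h1
    omega

/-! #### The counting inequality for connected hypergraphs -/

theorem conn_count {V : Finset ℕ} {E : Finset (Finset ℕ)} {r : ℕ}
    (hH : ∀ e ∈ E, e.Nonempty)
    (hC : ∀ v ∈ V, ∃ l, HJoined E l r v) (hr : r ∈ V) :
    V.card ≤ (∑ e ∈ E, (e.card - 1)) + 1 := by
  have hme : ∀ e ∈ E, ∃ u, u ∈ e ∧ ∀ w ∈ e, hdist E r u ≤ hdist E r w := by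
    intro e he
    obtain ⟨u, hu, hmin⟩ := Finset.exists_min_image e (hdist E r) (hH e he)
    exact ⟨u, hu, hmin⟩
  choose! me hme1 hme2 using hme
  have key : ∀ v ∈ V.erase r, ∃ e, e ∈ E ∧ v ∈ e ∧ ∃ u ∈ e, hdist E r u < hdist E r v := by
    intro v hv
    obtain ⟨hvr, hvV⟩ := Finset.mem_erase.mp hv
    have hJ := hjoined_hdist (hC v hvV)
    have hd0 : hdist E r v ≠ 0 := fun h0 => hvr (eq_of_hdist_zero (hC v hvV) h0).symm
    obtain ⟨d', hd'⟩ := Nat.exists_eq_succ_of_ne_zero hd0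
    rw [hd'] at hJ
    obtain ⟨u, hu1, hu2⟩ := hjoined_succ_iff hJ
    obtain ⟨hne, e, he, hue, hve⟩ := hu2
    refine ⟨e, he, hve, u, hue, ?_⟩
    have := hdist_le hu1
    omega
  choose! ev h1 h2 h3 using key
  have hcard : (V.erase r).card ≤
      (E.biUnion (fun e => (e.erase (me e)).image (fun v => (e, v)))).card := by
    apply Finset.card_le_card_of_injOn (fun v => (ev v, v))
    · intro v hv
      rw [Finset.mem_coe, Finset.mem_biUnion]
      refine ⟨ev v, h1 v hv, ?_⟩
      rw [Finset.mem_image]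
      refine ⟨v, ?_, rfl⟩
      rw [Finset.mem_erase]
      refine ⟨?_, h2 v hv⟩
      obtain ⟨u, hu, hlt⟩ := h3 v hv
      have := hme2 (ev v) (h1 v hv) u hu
      intro hvm
      rw [← hvm] at this
      omega
    · intro a _ b _ hab
      exact congrArg Prod.snd hab
  have hT : (E.biUnion (fun e => (e.erase (me e)).image (fun v => (e, v)))).card
      ≤ ∑ e ∈ E, (e.card - 1) := by
    refine le_trans (Finset.card_biUnion_le) (Finset.sum_le_sum fun e he => ?_)
    refine le_trans (Finset.card_image_le) ?_
    rw [Finset.card_erase_of_mem (hme1 e he)]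
  have hVc : V.card = (V.erase r).card + 1 := by
    rw [Finset.card_erase_of_mem hr]
    have := Finset.card_pos.mpr ⟨r, hr⟩
    omega
  omega

/-! #### Strict minimality of the marked vertex in a hypertree -/

theorem unique_min {V : Finset ℕ} {E : Finset (Finset ℕ)} {r : ℕ} {e : Finset ℕ} {u v : ℕ}
    (hT : IsHypertree V E) (hr : r ∈ V) (he : e ∈ E) (hu : u ∈ e) (hv : v ∈ e)
    (huv : u ≠ v)
    (humin : ∀ w ∈ e, hdist E r u ≤ hdist E r w)
    (hvmin : ∀ w ∈ e, hdist E r v ≤ hdist E r w) : False := by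
  obtain ⟨hHg, hCon, hcount⟩ := hT
  have hex : ∀ y ∈ V, ∃ l, HJoined E l r y := fun y hy => hjoined_of_rtg (hCon r hr y hy)
  have heV : e ⊆ V := (hHg e he).1
  set d := hdist E r u with hd
  have hdv : hdist E r v = d := le_antisymm (hvmin u hu) (humin v hv)
  set E' := if 3 ≤ e.card then insert (e.erase v) (E.erase e) else E.erase e with hE'
  have hEsub : ∀ f ∈ E, f ≠ e → f ∈ E' := by
    intro f hf hfe
    rw [hE']
    split
    · exact Finset.mem_insert_of_mem (Finset.mem_erase.mpr ⟨hfe, hf⟩)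
    · exact Finset.mem_erase.mpr ⟨hfe, hf⟩
  have main : ∀ n, ∀ y ∈ V, hdist E r y = n → Relation.ReflTransGen (HAdj E') r y := by
    intro n
    induction n using Nat.strong_induction_on with
    | _ n IH =>
      intro y hy hyd
      rcases Nat.eq_zero_or_pos n with hn0 | hnpos
      · subst hn0
        rw [eq_of_hdist_zero (hex y hy) hyd]
      · obtain ⟨n', rfl⟩ := Nat.exists_eq_succ_of_ne_zero (by omega : n ≠ 0)
        have hJ : HJoined E (n' + 1) r y := by
          have := hjoined_hdist (hex y hy); rwa [hyd] at this
        obtain ⟨z, hz1, hz2⟩ := hjoined_succ_iff hJ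
        obtain ⟨hne, f, hf, hzf, hyf⟩ := hz2
        have hdz : hdist E r z ≤ n' := hdist_le hz1
        by_cases hfe : f = e
        · subst hfe
          have hdzd : d ≤ hdist E r z := humin z hzf
          have hyde : d ≤ hdist E r y := humin y hyf
          have hygt : d + 1 ≤ hdist E r y := by omega
          have hyu : y ≠ u := by intro h; rw [h, ← hd] at hygt; omega
          have hyv : y ≠ v := by intro h; rw [h, hdv] at hygt; omega
          have hcard3 : 3 ≤ f.card := by
            have hsub : ({u, v, y} : Finset ℕ) ⊆ f := by
              intro w hw
              simp only [Finset.mem_insert, Finset.mem_singleton] at hw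
              rcases hw with rfl | rfl | rfl
              · exact hu
              · exact hv
              · exact hyf
            have hc3 : ({u, v, y} : Finset ℕ).card = 3 := by
              rw [Finset.card_insert_of_notMem (by simp [huv, hyu.symm]),
                Finset.card_insert_of_notMem (by simp [hyv.symm]), Finset.card_singleton]
            calc 3 = ({u, v, y} : Finset ℕ).card := hc3.symm
              _ ≤ f.card := Finset.card_le_card hsub
          have hE'eq : E' = insert (f.erase v) (E.erase f) := by rw [hE', if_pos hcard3]
          have hadj : HAdj E' y u := by
            refine ⟨hyu, f.erase v, ?_, ?_, ?_⟩
            · rw [hE'eq]; exact Finset.mem_insert_self _ _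
            · exact Finset.mem_erase.mpr ⟨hyv, hyf⟩
            · exact Finset.mem_erase.mpr ⟨huv, hu⟩
          have hru : Relation.ReflTransGen (HAdj E') r u := by
            refine IH d (by omega) u (heV hu) hd.symm
          exact hru.tail (hadj_symm hadj)
        · have hzV : z ∈ V := (hHg f hf).1 hzf
          have hz : Relation.ReflTransGen (HAdj E') r z :=
            IH (hdist E r z) (by omega) z hzV rfl
          exact hz.tail ⟨hne, f, hEsub f hf hfe, hzf, hyf⟩
  -- counting contradiction
  have hH' : ∀ f ∈ E', f.Nonempty := by
    intro f hf
    rw [hE'] at hf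
    have hcard2 : ∀ g ∈ E, g.Nonempty := by
      intro g hg
      have := (hHg g hg).2
      exact Finset.card_pos.mp (by omega)
    by_cases h3 : 3 ≤ e.card
    · rw [if_pos h3] at hf
      rcases Finset.mem_insert.mp hf with rfl | hf
      · apply Finset.card_pos.mp
        rw [Finset.card_erase_of_mem hv]
        omega
      · exact hcard2 f (Finset.mem_erase.mp hf).2
    · rw [if_neg h3] at hf
      exact hcard2 f (Finset.mem_erase.mp hf).2
  have hC' : ∀ y ∈ V, ∃ l, HJoined E' l r y := fun y hy =>
    hjoined_of_rtg (main (hdist E r y) y hy rfl)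
  have hcount' := conn_count hH' hC' hr
  -- sum estimates
  have hsume : ∑ g ∈ E, (g.card - 1) + E.card = ∑ g ∈ E, g.card := by
    rw [Finset.card_eq_sum_ones, ← Finset.sum_add_distrib]
    refine Finset.sum_congr rfl fun g hg => ?_
    have := (hHg g hg).2
    omega
  have hE'sum : ∑ g ∈ E', (g.card - 1) + 1 ≤ ∑ g ∈ E, (g.card - 1) := by
    have hsplit : ∑ g ∈ E, (g.card - 1) = (e.card - 1) + ∑ g ∈ E.erase e, (g.card - 1) :=
      (Finset.add_sum_erase E _ he).symm
    rw [hE']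
    by_cases h3 : 3 ≤ e.card
    · rw [if_pos h3]
      by_cases hmem : e.erase v ∈ E.erase e
      · rw [Finset.insert_eq_self.mpr hmem]
        have h2 := (hHg e he).2
        omega
      · rw [Finset.sum_insert hmem, Finset.card_erase_of_mem hv]
        omega
    · rw [if_neg h3]
      have h2 := (hHg e he).2
      omega
  have hVpos : 1 ≤ V.card := Finset.card_pos.mpr ⟨r, hr⟩
  have hEVcard : E.card ≤ ∑ g ∈ E, g.card := by
    calc E.card = ∑ _g ∈ E, 1 := by rw [Finset.sum_const, smul_eq_mul, mul_one]
      _ ≤ ∑ g ∈ E, g.card := Finset.sum_le_sum fun g hg => by have := (hHg g hg).2; omega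
  omega

theorem plateau {V : Finset ℕ} {E : Finset (Finset ℕ)} {r : ℕ} {e : Finset ℕ} {u v : ℕ}
    (hT : IsHypertree V E) (hr : r ∈ V) (he : e ∈ E) (hm : IsMarked E r e u)
    (hv : v ∈ e) (hvu : v ≠ u) : hdist E r v = hdist E r u + 1 := by
  obtain ⟨hu, humin⟩ := hm
  obtain ⟨hHg, hCon, hcount⟩ := hT
  have heV : e ⊆ V := (hHg e he).1
  have hex : ∀ y ∈ V, ∃ l, HJoined E l r y := fun y hy => hjoined_of_rtg (hCon r hr y hy)
  have h1 : hdist E r v ≤ hdist E r u + 1 :=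
    hdist_le (hjoined_succ (hjoined_hdist (hex u (heV hu))) ⟨hvu.symm, e, he, hu, hv⟩)
  have h2 : hdist E r u ≤ hdist E r v := humin v hv
  have h3 : hdist E r u ≠ hdist E r v := by
    intro heq
    exact unique_min ⟨hHg, hCon, hcount⟩ hr he hu hv (Ne.symm hvu) humin
      (fun w hw => heq ▸ humin w hw)
  omega

/-! #### Assignments -/

/-- Functions from `P` to `U`, extended by `0` off `P`. -/
noncomputable def AsgFin (P : Finset (Finset ℕ)) (U : Finset ℕ) : Finset (Finset ℕ → ℕ) :=
  (P.pi (fun _ => U)).image (fun g p => if h : p ∈ P then g p h else 0)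

theorem mem_AsgFin {P : Finset (Finset ℕ)} {U : Finset ℕ} {f : Finset ℕ → ℕ} :
    f ∈ AsgFin P U ↔ (∀ p, p ∉ P → f p = 0) ∧ ∀ p ∈ P, f p ∈ U := by
  unfold AsgFin
  rw [Finset.mem_image]
  constructor
  · rintro ⟨g, hg, rfl⟩
    rw [Finset.mem_pi] at hg
    constructor
    · intro p hp; exact dif_neg hp
    · intro p hp; simpa [hp] using hg p hp
  · rintro ⟨h0, hU⟩
    refine ⟨fun p _ => f p, Finset.mem_pi.mpr (fun p hp => hU p hp), ?_⟩
    funext p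
    by_cases hp : p ∈ P
    · exact dif_pos hp
    · rw [dif_neg hp, h0 p hp]

/-- The part-level structure of an assignment is acyclic, witnessed by depths. -/
def RootedValid (R₀ : Finset ℕ) (Q : Finset (Finset ℕ)) (f : Finset ℕ → ℕ) : Prop :=
  ∃ D : ℕ → ℕ, (∀ v ∈ R₀, D v = 0) ∧ ∀ p ∈ Q, ∀ v ∈ p, D v = D (f p) + 1

noncomputable def filt (R₀ : Finset ℕ) (Q : Finset (Finset ℕ)) : Finset (Finset ℕ → ℕ) :=
  (AsgFin Q (R₀ ∪ Q.biUnion id)).filter (RootedValid R₀ Q)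

theorem sum_AsgFin {R : Type*} [CommSemiring R] (x : ℕ → R) (C : Finset (Finset ℕ))
    (U : Finset ℕ) :
    ∑ g ∈ AsgFin C U, ∏ p ∈ C, x (g p) = (∑ v ∈ U, x v) ^ C.card := by
  unfold AsgFin
  have hinj : ∀ g1 ∈ C.pi (fun _ => U), ∀ g2 ∈ C.pi (fun _ => U),
      (fun p => if h : p ∈ C then g1 p h else 0) = (fun p => if h : p ∈ C then g2 p h else 0) →
      g1 = g2 := by
    intro g1 _ g2 _ h
    funext p hp
    have := congrFun h p
    rwa [dif_pos hp, dif_pos hp] at this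
  rw [Finset.sum_image hinj]
  have h2 : ∀ g ∈ C.pi (fun _ => U), ∏ p ∈ C, x ((fun p => if h : p ∈ C then g p h else 0) p)
      = ∏ p ∈ C.attach, x (g p.1 p.2) := by
    intro g _
    rw [← Finset.prod_attach C (fun p => x ((fun p => if h : p ∈ C then g p h else 0) p))]
    refine Finset.prod_congr rfl fun p _ => ?_
    simp [dif_pos p.2]
  rw [Finset.sum_congr rfl h2, ← Finset.prod_sum C (fun _ => U) (fun _ v => x v),
    Finset.prod_const]

/-- Merge two assignments. -/
def merge (C : Finset (Finset ℕ)) (g f' : Finset ℕ → ℕ) : Finset ℕ → ℕ :=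
  fun p => if p ∈ C then g p else f' p

/-- Decomposition of valid assignments by the set `C` of parts attached to the root. -/
theorem decomp {R : Type*} [CommSemiring R] (R₀ : Finset ℕ) (Q : Finset (Finset ℕ))
    (hQne : Q.Nonempty)
    (h1 : ∀ p ∈ Q, p.Nonempty)
    (h2 : ∀ p ∈ Q, ∀ q ∈ Q, p ≠ q → Disjoint p q)
    (h3 : ∀ p ∈ Q, Disjoint p R₀)
    (F : (Finset ℕ → ℕ) → R) :
    ∑ f ∈ filt R₀ Q, F f
      = ∑ C ∈ Q.powerset.filter (fun C => C.Nonempty),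
          ∑ g ∈ AsgFin C R₀, ∑ f' ∈ filt (C.biUnion id) (Q \ C), F (merge C g f') := by
  have hQdisj : ∀ v, v ∈ Q.biUnion id → v ∉ R₀ := by
    intro v hv hvR
    obtain ⟨q, hq, hvq⟩ := Finset.mem_biUnion.mp hv
    exact Finset.disjoint_left.mp (h3 q hq) hvq hvR
  have hrhs : ∑ C ∈ Q.powerset.filter (fun C => C.Nonempty),
      ∑ g ∈ AsgFin C R₀, ∑ f' ∈ filt (C.biUnion id) (Q \ C), F (merge C g f')
      = ∑ t ∈ (Q.powerset.filter (fun C => C.Nonempty)).sigma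
          (fun C => AsgFin C R₀ ×ˢ filt (C.biUnion id) (Q \ C)),
          F (merge t.1 t.2.1 t.2.2) := by
    rw [Finset.sum_congr rfl (fun C _ => (Finset.sum_product
      (s := AsgFin C R₀) (t := filt (C.biUnion id) (Q \ C))
      (f := fun z => F (merge C z.1 z.2))).symm)]
    exact Finset.sum_sigma' _ _ _
  rw [hrhs]
  refine Finset.sum_nbij'
    (fun f => ⟨Q.filter (fun p => f p ∈ R₀),
      (fun p => if p ∈ Q.filter (fun p => f p ∈ R₀) then f p else 0,
       fun p => if p ∈ Q \ Q.filter (fun p => f p ∈ R₀) then f p else 0)⟩)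
    (fun t => merge t.1 t.2.1 t.2.2) ?_ ?_ ?_ ?_ ?_
  · -- forward membership
    intro f hf
    rw [filt, Finset.mem_filter, mem_AsgFin] at hf
    obtain ⟨⟨hf0, hfU⟩, D, hD0, hD⟩ := hf
    set C := Q.filter (fun p => f p ∈ R₀) with hC
    have hCQ : C ⊆ Q := Finset.filter_subset _ _
    have hpart : ∀ p ∈ Q, f p ∉ R₀ → ∃ q ∈ Q, f p ∈ q := by
      intro p hp hpR
      rcases Finset.mem_union.mp (hfU p hp) with h | h
      · exact absurd h hpR
      · obtain ⟨q, hq, hfq⟩ := Finset.mem_biUnion.mp h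
        exact ⟨q, hq, hfq⟩
    have hCne : C.Nonempty := by
      obtain ⟨p₀, hp₀, hmin⟩ := Finset.exists_min_image Q (fun p => D (f p)) hQne
      refine ⟨p₀, Finset.mem_filter.mpr ⟨hp₀, ?_⟩⟩
      by_contra hpR
      obtain ⟨q, hq, hfq⟩ := hpart p₀ hp₀ hpR
      have := hD q hq (f p₀) hfq
      have := hmin q hq
      omega
    rw [Finset.mem_sigma, Finset.mem_product]
    dsimp only
    refine ⟨Finset.mem_filter.mpr ⟨Finset.mem_powerset.mpr hCQ, hCne⟩, ?_, ?_⟩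
    · rw [mem_AsgFin]
      constructor
      · intro p hp; rw [if_neg hp]
      · intro p hp
        rw [if_pos hp]
        exact (Finset.mem_filter.mp hp).2
    · rw [filt, Finset.mem_filter, mem_AsgFin]
      refine ⟨⟨fun p hp => if_neg hp, ?_⟩, ?_⟩
      · intro p hp
        rw [if_pos hp]
        obtain ⟨hpQC, hpC⟩ := Finset.mem_sdiff.mp hp
        have hpR : f p ∉ R₀ := fun h => hpC (Finset.mem_filter.mpr ⟨hpQC, h⟩)
        obtain ⟨q, hq, hfq⟩ := hpart p hpQC hpR
        by_cases hqC : q ∈ C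
        · exact Finset.mem_union_left _ (Finset.mem_biUnion.mpr ⟨q, hqC, hfq⟩)
        · exact Finset.mem_union_right _
            (Finset.mem_biUnion.mpr ⟨q, Finset.mem_sdiff.mpr ⟨hq, hqC⟩, hfq⟩)
      · refine ⟨fun v => D v - 1, ?_, ?_⟩
        · intro v hv
          dsimp only
          obtain ⟨q, hqC, hvq⟩ := Finset.mem_biUnion.mp hv
          obtain ⟨hqQ, hfqR⟩ := Finset.mem_filter.mp hqC
          have := hD q hqQ v hvq
          have := hD0 (f q) hfqR
          omega
        · intro p hp v hv
          dsimp only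
          obtain ⟨hpQ, hpC⟩ := Finset.mem_sdiff.mp hp
          rw [if_pos hp]
          have hpR : f p ∉ R₀ := fun h => hpC (Finset.mem_filter.mpr ⟨hpQ, h⟩)
          obtain ⟨q, hq, hfq⟩ := hpart p hpQ hpR
          have h1 := hD q hq (f p) hfq
          have h2 := hD p hpQ v hv
          omega
  · -- backward membership
    rintro ⟨C, g, f'⟩ ht
    dsimp only
    rw [Finset.mem_sigma, Finset.mem_product] at ht
    obtain ⟨hC, hg, hf'⟩ := ht
    obtain ⟨hCQ, hCne⟩ := Finset.mem_filter.mp hC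
    rw [Finset.mem_powerset] at hCQ
    rw [mem_AsgFin] at hg
    rw [filt, Finset.mem_filter, mem_AsgFin] at hf'
    obtain ⟨⟨hf'0, hf'U⟩, D', hD'0, hD'⟩ := hf'
    dsimp only at hg hf'0 hf'U hD'0 hD' hCQ hCne ⊢
    rw [filt, Finset.mem_filter, mem_AsgFin]
    have hsub : ∀ v, v ∈ C.biUnion id ∪ (Q \ C).biUnion id → v ∈ Q.biUnion id := by
      intro v hv
      rcases Finset.mem_union.mp hv with h | h <;>
        obtain ⟨q, hq, hvq⟩ := Finset.mem_biUnion.mp h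
      · exact Finset.mem_biUnion.mpr ⟨q, hCQ hq, hvq⟩
      · exact Finset.mem_biUnion.mpr ⟨q, (Finset.mem_sdiff.mp hq).1, hvq⟩
    refine ⟨⟨?_, ?_⟩, ?_⟩
    · intro p hp
      have hpC : p ∉ C := fun h => hp (hCQ h)
      have hpQC : p ∉ Q \ C := fun h => hp (Finset.mem_sdiff.mp h).1
      rw [merge, if_neg hpC]
      exact hf'0 p hpQC
    · intro p hp
      rw [merge]
      by_cases hpC : p ∈ C
      · rw [if_pos hpC]
        exact Finset.mem_union_left _ (hg.2 p hpC)
      · rw [if_neg hpC]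
        exact Finset.mem_union_right _
          (hsub _ (hf'U p (Finset.mem_sdiff.mpr ⟨hp, hpC⟩)))
    · refine ⟨fun v => if v ∈ R₀ then 0 else D' v + 1, fun v hv => if_pos hv, ?_⟩
      intro p hp v hv
      dsimp only
      have hvR : v ∉ R₀ := Finset.disjoint_left.mp (h3 p hp) hv
      rw [if_neg hvR, merge]
      by_cases hpC : p ∈ C
      · rw [if_pos hpC]
        have hgR : g p ∈ R₀ := hg.2 p hpC
        rw [if_pos hgR]
        have : D' v = 0 := hD'0 v (Finset.mem_biUnion.mpr ⟨p, hpC, hv⟩)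
        omega
      · rw [if_neg hpC]
        have hpQC : p ∈ Q \ C := Finset.mem_sdiff.mpr ⟨hp, hpC⟩
        have hf'pU := hf'U p hpQC
        have hf'R : f' p ∉ R₀ := hQdisj _ (hsub _ hf'pU)
        rw [if_neg hf'R]
        have := hD' p hpQC v hv
        omega
  · -- j ∘ i = id
    intro f hf
    dsimp only
    rw [filt, Finset.mem_filter, mem_AsgFin] at hf
    obtain ⟨⟨hf0, hfU⟩, _⟩ := hf
    funext p
    rw [merge]
    by_cases hpC : p ∈ Q.filter (fun p => f p ∈ R₀)
    · rw [if_pos hpC, if_pos hpC]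
    · rw [if_neg hpC]
      by_cases hpQ : p ∈ Q
      · rw [if_pos (Finset.mem_sdiff.mpr ⟨hpQ, hpC⟩)]
      · rw [if_neg (fun h => hpQ (Finset.mem_sdiff.mp h).1)]
        simp [hf0 p hpQ]
  · -- i ∘ j = id
    rintro ⟨C, g, f'⟩ ht
    dsimp only
    rw [Finset.mem_sigma, Finset.mem_product] at ht
    obtain ⟨hC, hg, hf'⟩ := ht
    obtain ⟨hCQ, hCne⟩ := Finset.mem_filter.mp hC
    rw [Finset.mem_powerset] at hCQ
    rw [mem_AsgFin] at hg
    rw [filt, Finset.mem_filter, mem_AsgFin] at hf'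
    obtain ⟨⟨hf'0, hf'U⟩, _⟩ := hf'
    dsimp only at hg hf'0 hf'U hCQ hCne
    have hCeq : Q.filter (fun p => merge C g f' p ∈ R₀) = C := by
      ext p
      rw [Finset.mem_filter, merge]
      constructor
      · rintro ⟨hpQ, hpR⟩
        by_contra hpC
        rw [if_neg hpC] at hpR
        have hpQC : p ∈ Q \ C := Finset.mem_sdiff.mpr ⟨hpQ, hpC⟩
        have := hf'U p hpQC
        rcases Finset.mem_union.mp this with h | h <;>
          obtain ⟨q, hq, hvq⟩ := Finset.mem_biUnion.mp h
        · exact Finset.disjoint_left.mp (h3 q (hCQ hq)) hvq hpR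
        · exact Finset.disjoint_left.mp (h3 q (Finset.mem_sdiff.mp hq).1) hvq hpR
      · intro hpC
        rw [if_pos hpC]
        exact ⟨hCQ hpC, hg.2 p hpC⟩
    refine Sigma.ext hCeq (heq_of_eq ?_)
    rw [hCeq]
    refine Prod.ext ?_ ?_
    · funext p
      dsimp only
      by_cases hpC : p ∈ C
      · rw [if_pos hpC, merge, if_pos hpC]
      · rw [if_neg hpC, (hg.1 p hpC).symm]
    · funext p
      dsimp only
      by_cases hpQC : p ∈ Q \ C
      · rw [if_pos hpQC, merge, if_neg (Finset.mem_sdiff.mp hpQC).2]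
      · rw [if_neg hpQC, (hf'0 p hpQC).symm]
  · -- function values agree
    intro f hf
    dsimp only
    congr 1
    rw [filt, Finset.mem_filter, mem_AsgFin] at hf
    obtain ⟨⟨hf0, hfU⟩, _⟩ := hf
    funext p
    rw [merge]
    by_cases hpC : p ∈ Q.filter (fun p => f p ∈ R₀)
    · rw [if_pos hpC, if_pos hpC]
    · rw [if_neg hpC]
      by_cases hpQ : p ∈ Q
      · rw [if_pos (Finset.mem_sdiff.mpr ⟨hpQ, hpC⟩)]
      · rw [if_neg (fun h => hpQ (Finset.mem_sdiff.mp h).1)]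
        simp [hf0 p hpQ]

/-! #### The binomial computation -/

theorem count_subsets {α : Type*} [DecidableEq α] (Q : Finset α) (p : α) (hp : p ∈ Q)
    (j : ℕ) (hj : 1 ≤ j) :
    ((Q.powersetCard j).filter (fun C => p ∈ C)).card = (Q.card - 1).choose (j - 1) := by
  have : ((Q.powersetCard j).filter (fun C => p ∈ C)).card
      = ((Q.erase p).powersetCard (j - 1)).card := by
    apply Finset.card_nbij' (fun C => C.erase p) (fun D => insert p D)
    · intro C hC
      obtain ⟨hCmem, hpC⟩ := Finset.mem_filter.mp hC
      obtain ⟨hCQ, hCcard⟩ := Finset.mem_powersetCard.mp hCmem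
      rw [Finset.mem_coe, Finset.mem_powersetCard]
      constructor
      · intro c hc
        obtain ⟨hcp, hcC⟩ := Finset.mem_erase.mp hc
        exact Finset.mem_erase.mpr ⟨hcp, hCQ hcC⟩
      · rw [Finset.card_erase_of_mem hpC, hCcard]
    · intro D hD
      obtain ⟨hDQ, hDcard⟩ := Finset.mem_powersetCard.mp hD
      have hpD : p ∉ D := fun h => (Finset.mem_erase.mp (hDQ h)).1 rfl
      rw [Finset.mem_coe, Finset.mem_filter, Finset.mem_powersetCard]
      refine ⟨⟨?_, ?_⟩, Finset.mem_insert_self p D⟩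
      · intro c hc
        rcases Finset.mem_insert.mp hc with rfl | hc
        · exact hp
        · exact (Finset.mem_erase.mp (hDQ hc)).2
      · rw [Finset.card_insert_of_notMem hpD, hDcard]
        omega
    · intro C hC
      exact Finset.insert_erase (Finset.mem_filter.mp hC).2
    · intro D hD
      have hDQ := (Finset.mem_powersetCard.mp hD).1
      have hpD : p ∉ D := fun h => (Finset.mem_erase.mp (hDQ h)).1 rfl
      exact Finset.erase_insert hpD
  rw [this, Finset.card_powersetCard, Finset.card_erase_of_mem hp]

theorem alg {R : Type*} [CommSemiring R] (Q : Finset (Finset ℕ)) (w : Finset ℕ → R) (s : R)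
    (n : ℕ) (hn : Q.card = n) (h1 : 1 ≤ n) :
    ∑ C ∈ Q.powerset.filter (fun C => C.Nonempty),
        s ^ (C.card - 1) *
          (if C = Q then 1 else (∑ p ∈ C, w p) * (∑ p ∈ Q, w p) ^ (n - C.card - 1))
      = (s + ∑ p ∈ Q, w p) ^ (n - 1) := by
  set Y := ∑ p ∈ Q, w p with hY
  have hQne : Q.Nonempty := Finset.card_pos.mp (by omega)
  rw [Finset.sum_filter, Finset.sum_powerset, hn]
  have hterm : ∀ j ∈ Finset.range (n + 1),
      (∑ C ∈ Q.powersetCard j, if C.Nonempty then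
          s ^ (C.card - 1) * (if C = Q then 1 else (∑ p ∈ C, w p) * Y ^ (n - C.card - 1))
        else 0)
      = if j = 0 then 0 else ((n - 1).choose (j - 1) : R) * (s ^ (j - 1) * Y ^ (n - j)) := by
    intro j hj
    rw [Finset.mem_range] at hj
    rcases Nat.eq_zero_or_pos j with rfl | hjpos
    · rw [if_pos rfl, Finset.powersetCard_zero, Finset.sum_singleton]
      simp
    · rw [if_neg (by omega)]
      by_cases hjn : j = n
      · subst hjn
        rw [← hn, Finset.powersetCard_self, Finset.sum_singleton, hn]
        rw [if_pos hQne, if_pos rfl, Nat.choose_self, Nat.sub_self, pow_zero]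
        push_cast
        ring
      · have hstep : ∀ C ∈ Q.powersetCard j,
            (if C.Nonempty then
              s ^ (C.card - 1) * (if C = Q then 1 else (∑ p ∈ C, w p) * Y ^ (n - C.card - 1))
            else 0)
            = s ^ (j - 1) * ((∑ p ∈ C, w p) * Y ^ (n - j - 1)) := by
          intro C hC
          obtain ⟨hCQ, hCcard⟩ := Finset.mem_powersetCard.mp hC
          have hCne : C.Nonempty := Finset.card_pos.mp (by omega)
          have hCQne : C ≠ Q := by
            intro h; rw [h, hn] at hCcard; omega
          rw [if_pos hCne, if_neg hCQne, hCcard]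
        rw [Finset.sum_congr rfl hstep, ← Finset.mul_sum]
        have hswap : ∑ C ∈ Q.powersetCard j, (∑ p ∈ C, w p) * Y ^ (n - j - 1)
            = (((n - 1).choose (j - 1) : R) * Y) * Y ^ (n - j - 1) := by
          rw [← Finset.sum_mul]
          congr 1
          have hin : ∀ C ∈ Q.powersetCard j, ∑ p ∈ C, w p
              = ∑ p ∈ Q, if p ∈ C then w p else 0 := by
            intro C hC
            have hCQ := (Finset.mem_powersetCard.mp hC).1
            rw [← Finset.sum_filter]
            congr 1
            ext p
            rw [Finset.mem_filter]
            exact ⟨fun hp => ⟨hCQ hp, hp⟩, fun hp => hp.2⟩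
          rw [Finset.sum_congr rfl hin, Finset.sum_comm]
          have hpt : ∀ p ∈ Q, (∑ C ∈ Q.powersetCard j, if p ∈ C then w p else 0)
              = ((n - 1).choose (j - 1) : R) * w p := by
            intro p hp
            rw [← Finset.sum_filter, Finset.sum_const, count_subsets Q p hp j hjpos,
              nsmul_eq_mul, hn]
          rw [Finset.sum_congr rfl hpt, ← Finset.mul_sum]
        rw [hswap]
        have hYpow : Y ^ (n - j - 1) * Y = Y ^ (n - j) := by
          rw [← pow_succ]
          congr 1
          omega
        rw [← hYpow]
        ring
  rw [Finset.sum_congr rfl hterm, Finset.sum_range_succ']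
  rw [if_pos rfl, add_zero]
  rw [add_pow]
  have hrange : Finset.range (n - 1 + 1) = Finset.range n := by congr 1; omega
  rw [hrange]
  refine Finset.sum_congr rfl fun i hi => ?_
  rw [if_neg (by omega : ¬ i + 1 = 0)]
  have h1 : i + 1 - 1 = i := by omega
  have h2 : n - (i + 1) = n - 1 - i := by omega
  rw [h1, h2]
  ring

/-! #### The master lemma -/

theorem master {R : Type*} [CommSemiring R] (x : ℕ → R) :
    ∀ n (Q : Finset (Finset ℕ)) (R₀ : Finset ℕ), Q.card = n →
    (∀ p ∈ Q, p.Nonempty) →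
    (∀ p ∈ Q, ∀ q ∈ Q, p ≠ q → Disjoint p q) →
    (∀ p ∈ Q, Disjoint p R₀) →
    ∑ f ∈ filt R₀ Q, ∏ p ∈ Q, x (f p)
      = if n = 0 then 1
        else (∑ v ∈ R₀, x v) * (∑ v ∈ R₀ ∪ Q.biUnion id, x v) ^ (n - 1) := by
  intro n
  induction n using Nat.strong_induction_on with
  | _ n IH =>
    intro Q R₀ hcard h1 h2 h3
    rcases Nat.eq_zero_or_pos n with rfl | hnpos
    · rw [if_pos rfl]
      have hQ : Q = ∅ := Finset.card_eq_zero.mp hcard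
      subst hQ
      have hfilt : filt R₀ ∅ = {fun _ => 0} := by
        ext f
        rw [filt, Finset.mem_filter, mem_AsgFin, Finset.mem_singleton]
        constructor
        · rintro ⟨⟨hf0, _⟩, _⟩
          funext p
          exact hf0 p (Finset.notMem_empty p)
        · rintro rfl
          refine ⟨⟨fun p _ => rfl, fun p hp => absurd hp (Finset.notMem_empty p)⟩,
            fun _ => 0, fun v _ => rfl, fun p hp => absurd hp (Finset.notMem_empty p)⟩
      rw [hfilt, Finset.sum_singleton, Finset.prod_empty]
    · rw [if_neg (by omega)]
      have hQne : Q.Nonempty := Finset.card_pos.mp (by omega)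
      rw [decomp R₀ Q hQne h1 h2 h3 (fun f => ∏ p ∈ Q, x (f p))]
      set w : Finset ℕ → R := fun p => ∑ v ∈ p, x v with hw
      have hYQ : ∀ S : Finset (Finset ℕ), S ⊆ Q → ∑ v ∈ S.biUnion id, x v = ∑ p ∈ S, w p := by
        intro S hSQ
        have hdisj : (↑S : Set (Finset ℕ)).PairwiseDisjoint (id : Finset ℕ → Finset ℕ) :=
          fun a ha b hb hab =>
            h2 a (hSQ (Finset.mem_coe.mp ha)) b (hSQ (Finset.mem_coe.mp hb)) hab
        rw [Finset.sum_biUnion hdisj]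
        exact Finset.sum_congr rfl fun p _ => rfl
      have hmain : ∀ C ∈ Q.powerset.filter (fun C => C.Nonempty),
          (∑ g ∈ AsgFin C R₀, ∑ f' ∈ filt (C.biUnion id) (Q \ C),
            ∏ p ∈ Q, x (merge C g f' p))
          = (∑ v ∈ R₀, x v) *
            ((∑ v ∈ R₀, x v) ^ (C.card - 1) *
              (if C = Q then 1 else (∑ p ∈ C, w p) * (∑ p ∈ Q, w p) ^ (n - C.card - 1))) := by
        intro C hC
        obtain ⟨hCQ', hCne⟩ := Finset.mem_filter.mp hC
        have hCQ : C ⊆ Q := Finset.mem_powerset.mp hCQ'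
        have hCcard : C.card ≤ n := hcard ▸ Finset.card_le_card hCQ
        have hCpos : 1 ≤ C.card := Finset.card_pos.mpr hCne
        have hprod : ∀ g ∈ AsgFin C R₀, ∀ f' ∈ filt (C.biUnion id) (Q \ C),
            ∏ p ∈ Q, x (merge C g f' p)
            = (∏ p ∈ C, x (g p)) * ∏ p ∈ Q \ C, x (f' p) := by
          intro g _ f' _
          rw [← Finset.prod_sdiff hCQ, mul_comm]
          congr 1
          · exact Finset.prod_congr rfl fun p hp => by rw [merge, if_pos hp]
          · exact Finset.prod_congr rfl fun p hp =>
              by rw [merge, if_neg (Finset.mem_sdiff.mp hp).2]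
        calc ∑ g ∈ AsgFin C R₀, ∑ f' ∈ filt (C.biUnion id) (Q \ C),
              ∏ p ∈ Q, x (merge C g f' p)
            = ∑ g ∈ AsgFin C R₀, ∑ f' ∈ filt (C.biUnion id) (Q \ C),
              (∏ p ∈ C, x (g p)) * ∏ p ∈ Q \ C, x (f' p) :=
              Finset.sum_congr rfl fun g hg => Finset.sum_congr rfl fun f' hf' =>
                hprod g hg f' hf'
          _ = (∑ g ∈ AsgFin C R₀, ∏ p ∈ C, x (g p)) *
              (∑ f' ∈ filt (C.biUnion id) (Q \ C), ∏ p ∈ Q \ C, x (f' p)) := by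
              rw [Finset.sum_mul_sum]
          _ = (∑ v ∈ R₀, x v) ^ C.card *
              (∑ f' ∈ filt (C.biUnion id) (Q \ C), ∏ p ∈ Q \ C, x (f' p)) := by
              rw [sum_AsgFin]
          _ = (∑ v ∈ R₀, x v) *
              ((∑ v ∈ R₀, x v) ^ (C.card - 1) *
                (if C = Q then 1 else (∑ p ∈ C, w p) * (∑ p ∈ Q, w p) ^ (n - C.card - 1))) := by
              have hsd : (Q \ C).card = n - C.card := by
                rw [Finset.card_sdiff_of_subset hCQ, hcard]
              have hIH := IH (n - C.card) (by omega) (Q \ C) (C.biUnion id) hsd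
                (fun p hp => h1 p (Finset.mem_sdiff.mp hp).1)
                (fun p hp q hq hpq =>
                  h2 p (Finset.mem_sdiff.mp hp).1 q (Finset.mem_sdiff.mp hq).1 hpq)
                (fun p hp => by
                  apply Finset.disjoint_biUnion_right _ _ _ |>.mpr
                  intro q hq
                  exact h2 p (Finset.mem_sdiff.mp hp).1 q (hCQ hq)
                    (fun h => (Finset.mem_sdiff.mp hp).2 (h ▸ hq)))
              rw [hIH]
              have hpow : (∑ v ∈ R₀, x v) ^ C.card
                  = (∑ v ∈ R₀, x v) * (∑ v ∈ R₀, x v) ^ (C.card - 1) := by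
                conv_lhs => rw [show C.card = (C.card - 1) + 1 by omega]
                rw [pow_succ']
              by_cases hCeq : C = Q
              · rw [if_pos hCeq, if_pos (by rw [hCeq, hcard]; omega : n - C.card = 0),
                  mul_one, mul_one, hpow]
              · have hClt : C.card < n := by
                  rw [← hcard]
                  exact Finset.card_lt_card (Finset.ssubset_iff_subset_ne.mpr ⟨hCQ, hCeq⟩)
                rw [if_neg hCeq, if_neg (by omega : ¬ n - C.card = 0)]
                have hU : C.biUnion id ∪ (Q \ C).biUnion id = Q.biUnion id := by
                  ext v
                  simp only [Finset.mem_union, Finset.mem_biUnion, id]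
                  constructor
                  · rintro (⟨q, hq, hv⟩ | ⟨q, hq, hv⟩)
                    · exact ⟨q, hCQ hq, hv⟩
                    · exact ⟨q, (Finset.mem_sdiff.mp hq).1, hv⟩
                  · rintro ⟨q, hq, hv⟩
                    by_cases hqC : q ∈ C
                    · exact Or.inl ⟨q, hqC, hv⟩
                    · exact Or.inr ⟨q, Finset.mem_sdiff.mpr ⟨hq, hqC⟩, hv⟩
                rw [hU, hYQ C hCQ, hYQ Q (subset_refl Q), hpow]
                have hsd2 : n - C.card - 1 = n - C.card - 1 := rfl
                ring
      rw [Finset.sum_congr rfl hmain, ← Finset.mul_sum, alg Q w (∑ v ∈ R₀, x v) n hcard (by omega)]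
      congr 1
      rw [Finset.sum_union, hYQ Q (subset_refl Q)]
      apply Finset.disjoint_biUnion_right _ _ _ |>.mpr
      intro q hq
      exact (h3 q hq).symm

/-! #### Hypertrees from assignments and back -/

noncomputable def edgesOf (f : Finset ℕ → ℕ) (P : Finset (Finset ℕ)) : Finset (Finset ℕ) :=
  P.image (fun p => insert (f p) p)

noncomputable def canonF (V : Finset ℕ) (r : ℕ) (P : Finset (Finset ℕ))
    (E : Finset (Finset ℕ)) : Finset ℕ → ℕ :=
  fun p => if h : p ∈ P ∧ ∃ v, v ∈ V ∧ v ∉ p ∧ insert v p ∈ E ∧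
      ∀ w ∈ insert v p, hdist E r v ≤ hdist E r w then h.2.choose else 0

theorem synthesis {V : Finset ℕ} {r : ℕ} {P : Finset (Finset ℕ)} {f : Finset ℕ → ℕ}
    (hr : r ∈ V) (hP : IsPartitionOf (V.erase r) P)
    (hfV : ∀ p ∈ P, f p ∈ V)
    (hfD : ∃ D : ℕ → ℕ, D r = 0 ∧ ∀ p ∈ P, ∀ v ∈ p, D v = D (f p) + 1) :
    HasPruferPartition V r (edgesOf f P) P ∧
      (∀ p ∈ P, ∀ q ∈ P, insert (f p) p = insert (f q) q → p = q) ∧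
      (∀ p ∈ P, ∀ w ∈ p, hdist (edgesOf f P) r (f p) < hdist (edgesOf f P) r w) ∧
      (∀ p ∈ P, f p ∉ p) := by
  obtain ⟨D, hD0, hD⟩ := hfD
  obtain ⟨hPne, hPdisj, hPba⟩ := hP
  set E := edgesOf f P with hE
  have hmemE : ∀ e, e ∈ E ↔ ∃ p, p ∈ P ∧ insert (f p) p = e := by
    intro e
    rw [hE, edgesOf, Finset.mem_image]
  have hpVr : ∀ p ∈ P, p ⊆ V.erase r := by
    intro p hp v hv
    rw [← hPba]
    exact Finset.mem_biUnion.mpr ⟨p, hp, hv⟩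
  have hfnp : ∀ p ∈ P, f p ∉ p := by
    intro p hp hmem
    have := hD p hp (f p) hmem
    omega
  have hinj : ∀ p ∈ P, ∀ q ∈ P, insert (f p) p = insert (f q) q → p = q := by
    intro p hp q hq heq
    by_contra hpq
    have hdisj := hPdisj p hp q hq hpq
    have hpfq : ∀ v ∈ p, v = f q := by
      intro v hv
      have hv2 : v ∈ insert (f q) q := heq ▸ Finset.mem_insert_of_mem hv
      rcases Finset.mem_insert.mp hv2 with h | h
      · exact h
      · exact absurd h (Finset.disjoint_left.mp hdisj hv)
    have hqfp : ∀ v ∈ q, v = f p := by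
      intro v hv
      have hv2 : v ∈ insert (f p) p := heq ▸ Finset.mem_insert_of_mem hv
      rcases Finset.mem_insert.mp hv2 with h | h
      · exact h
      · exact absurd h (Finset.disjoint_right.mp hdisj hv)
    obtain ⟨v, hv⟩ := hPne p hp
    obtain ⟨u, hu⟩ := hPne q hq
    have hfq_p : f q ∈ p := hpfq v hv ▸ hv
    have hfp_q : f p ∈ q := hqfp u hu ▸ hu
    have e1 := hD p hp (f q) hfq_p
    have e2 := hD q hq (f p) hfp_q
    omega
  have hrp : ∀ p ∈ P, r ∉ p := fun p hp h => (Finset.mem_erase.mp (hpVr p hp h)).1 rfl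
  have hLip : ∀ a b, HAdj E a b → D b ≤ D a + 1 := by
    rintro a b ⟨hab, e, he, hae, hbe⟩
    obtain ⟨p, hp, rfl⟩ := (hmemE e).mp he
    rcases Finset.mem_insert.mp hae with ha | ha <;> rcases Finset.mem_insert.mp hbe with hb | hb
    · exact absurd (ha.trans hb.symm) hab
    · have h1 := hD p hp b hb
      rw [ha]
      omega
    · have h1 := hD p hp a ha
      rw [hb]
      omega
    · have h1 := hD p hp a ha
      have h2 := hD p hp b hb
      omega
  have hup : ∀ n, ∀ v ∈ V, D v = n → HJoined E n r v := by
    intro n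
    induction n using Nat.strong_induction_on with
    | _ n IH =>
      intro v hv hDv
      by_cases hvr : v = r
      · have hn0 : n = 0 := by rw [← hDv, hvr]; exact hD0
        rw [hn0, hvr]
        exact hjoined_refl E r
      · have hvV : v ∈ V.erase r := Finset.mem_erase.mpr ⟨hvr, hv⟩
        obtain ⟨p, hp, hvp⟩ := Finset.mem_biUnion.mp (hPba ▸ hvV)
        have hDvp := hD p hp v hvp
        have hfpV : f p ∈ V := hfV p hp
        have hprev : HJoined E (D (f p)) r (f p) :=
          IH (D (f p)) (by omega) (f p) hfpV rfl
        have hadj : HAdj E (f p) v :=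
          ⟨fun h => hfnp p hp (h ▸ hvp), insert (f p) p, (hmemE _).mpr ⟨p, hp, rfl⟩,
            Finset.mem_insert_self _ _, Finset.mem_insert_of_mem hvp⟩
        have hn : n = D (f p) + 1 := by omega
        rw [hn]
        exact hjoined_succ hprev hadj
  have hexist : ∀ v ∈ V, ∃ l, HJoined E l r v := fun v hv => ⟨D v, hup (D v) v hv rfl⟩
  have hdD : ∀ v ∈ V, hdist E r v = D v := by
    intro v hv
    have h1 : hdist E r v ≤ D v := hdist_le (hup (D v) v hv rfl)
    have h2 : D v ≤ D r + hdist E r v :=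
      le_of_lipschitz hLip _ r v (hjoined_hdist (hexist v hv))
    rw [hD0] at h2
    omega
  have hVsub : ∀ p ∈ P, insert (f p) p ⊆ V := by
    intro p hp v hv
    rcases Finset.mem_insert.mp hv with rfl | hv
    · exact hfV p hp
    · exact Finset.mem_of_mem_erase (hpVr p hp hv)
  have hHg : IsHypergraph V E := by
    intro e he
    obtain ⟨p, hp, rfl⟩ := (hmemE e).mp he
    refine ⟨hVsub p hp, ?_⟩
    rw [Finset.card_insert_of_notMem (hfnp p hp)]
    have := Finset.card_pos.mpr (hPne p hp)
    omega
  have hConn : HConnected V E := by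
    have hrtg : ∀ v ∈ V, Relation.ReflTransGen (HAdj E) r v := fun v hv =>
      rtg_of_hjoined (hup (D v) v hv rfl)
    intro v hv w hw
    exact Relation.ReflTransGen.trans
      (by haveI : Std.Symm (HAdj E) := ⟨fun a b h => hadj_symm h⟩; exact Std.Symm.symm _ _ (hrtg v hv)) (hrtg w hw)
  have hcardE : E.card = P.card := by
    rw [hE, edgesOf]
    exact Finset.card_image_of_injOn fun p hp q hq h => hinj p hp q hq h
  have hsum : (∑ e ∈ E, e.card) + 1 = V.card + E.card := by
    have hsum1 : ∑ e ∈ E, e.card = ∑ p ∈ P, (p.card + 1) := by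
      rw [hE, edgesOf, Finset.sum_image (fun p hp q hq h => hinj p hp q hq h)]
      exact Finset.sum_congr rfl fun p hp => Finset.card_insert_of_notMem (hfnp p hp)
    have hsum2 : ∑ p ∈ P, p.card = (V.erase r).card := by
      rw [← hPba]
      exact (Finset.card_biUnion fun p hp q hq h => hPdisj p hp q hq h).symm
    have hVc : V.card = (V.erase r).card + 1 := by
      rw [Finset.card_erase_of_mem hr]
      have := Finset.card_pos.mpr ⟨r, hr⟩
      omega
    rw [hsum1, Finset.sum_add_distrib, hsum2, Finset.sum_const, smul_eq_mul, mul_one,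
      hcardE, hVc]
    omega
  have hstrict : ∀ p ∈ P, ∀ w ∈ p, hdist E r (f p) < hdist E r w := by
    intro p hp w hw
    rw [hdD (f p) (hfV p hp), hdD w (Finset.mem_of_mem_erase (hpVr p hp hw)),
      hD p hp w hw]
    omega
  have hmark : ∀ p ∈ P, IsMarked E r (insert (f p) p) (f p) := by
    intro p hp
    refine ⟨Finset.mem_insert_self _ _, ?_⟩
    intro w hw
    rcases Finset.mem_insert.mp hw with rfl | hw
    · exact le_refl _
    · exact le_of_lt (hstrict p hp w hw)
  refine ⟨⟨⟨hHg, hConn, hsum⟩, ?_⟩, hinj, hstrict, hfnp⟩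
  refine ⟨fun e => if h : ∃ p, p ∈ P ∧ insert (f p) p = e then f h.choose else 0, ?_, ?_, ?_⟩
  · intro e he
    obtain ⟨p, hp, rfl⟩ := (hmemE e).mp he
    have hex : ∃ q, q ∈ P ∧ insert (f q) q = insert (f p) p := ⟨p, hp, rfl⟩
    dsimp only
    rw [dif_pos hex]
    obtain ⟨hqP, hqe⟩ := hex.choose_spec
    have : hex.choose = p := hinj _ hqP p hp hqe
    rw [this]
    exact hmark p hp
  · rw [hE, edgesOf, Finset.image_image]
    symm
    rw [Finset.image_congr (g := id), Finset.image_id]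
    intro p hp
    simp only [Function.comp, id]
    have hex : ∃ q, q ∈ P ∧ insert (f q) q = insert (f p) p := ⟨p, hp, rfl⟩
    rw [dif_pos hex]
    obtain ⟨hqP, hqe⟩ := hex.choose_spec
    have heq : hex.choose = p := hinj _ hqP p hp hqe
    rw [heq, Finset.erase_insert (hfnp p hp)]
  · intro e1 he1 e2 he2 heq
    rw [Finset.mem_coe] at he1 he2
    obtain ⟨p1, hp1, rfl⟩ := (hmemE e1).mp he1
    obtain ⟨p2, hp2, rfl⟩ := (hmemE e2).mp he2
    dsimp only at heq
    have hval : ∀ p ∈ P, (if h : ∃ q, q ∈ P ∧ insert (f q) q = insert (f p) p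
        then f h.choose else 0) = f p := by
      intro p hp
      have hex : ∃ q, q ∈ P ∧ insert (f q) q = insert (f p) p := ⟨p, hp, rfl⟩
      rw [dif_pos hex]
      obtain ⟨hqP, hqe⟩ := hex.choose_spec
      rw [hinj _ hqP p hp hqe]
    rw [hval p1 hp1, hval p2 hp2, Finset.erase_insert (hfnp p1 hp1),
      Finset.erase_insert (hfnp p2 hp2)] at heq
    rw [heq]

theorem canonF_edgesOf {V : Finset ℕ} {r : ℕ} {P : Finset (Finset ℕ)} {f : Finset ℕ → ℕ}
    (hr : r ∈ V) (hP : IsPartitionOf (V.erase r) P)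
    (hf0 : ∀ p, p ∉ P → f p = 0)
    (hfV : ∀ p ∈ P, f p ∈ V)
    (hfD : ∃ D : ℕ → ℕ, D r = 0 ∧ ∀ p ∈ P, ∀ v ∈ p, D v = D (f p) + 1) :
    canonF V r P (edgesOf f P) = f := by
  obtain ⟨hPP, hinj, hstrict, hfnp⟩ := synthesis hr hP hfV hfD
  set E := edgesOf f P with hE
  have hmemE : ∀ e, e ∈ E ↔ ∃ p, p ∈ P ∧ insert (f p) p = e := by
    intro e
    rw [hE, edgesOf, Finset.mem_image]
  funext p
  by_cases hp : p ∈ P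
  · have hcond : ∃ v, v ∈ V ∧ v ∉ p ∧ insert v p ∈ E ∧
        ∀ w ∈ insert v p, hdist E r v ≤ hdist E r w := by
      refine ⟨f p, hfV p hp, hfnp p hp, (hmemE _).mpr ⟨p, hp, rfl⟩, ?_⟩
      intro w hw
      rcases Finset.mem_insert.mp hw with rfl | hw
      · exact le_refl _
      · exact le_of_lt (hstrict p hp w hw)
    have hfull : p ∈ P ∧ ∃ v, v ∈ V ∧ v ∉ p ∧ insert v p ∈ E ∧
        ∀ w ∈ insert v p, hdist E r v ≤ hdist E r w := ⟨hp, hcond⟩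
    rw [canonF, dif_pos hfull]
    obtain ⟨hV', hnp', hE', hmin'⟩ := hfull.2.choose_spec
    set v' := hfull.2.choose with hv'
    obtain ⟨q, hq, hqe⟩ := (hmemE _).mp hE'
    have hv'fq : v' = f q := by
      by_contra hne
      have hv'q : v' ∈ q := by
        have : v' ∈ insert (f q) q := hqe ▸ Finset.mem_insert_self v' p
        rcases Finset.mem_insert.mp this with h | h
        · exact absurd h hne
        · exact h
      have h1 := hstrict q hq v' hv'q
      have h2 : hdist E r v' ≤ hdist E r (f q) :=
        hmin' (f q) (by rw [← hqe]; exact Finset.mem_insert_self _ _)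
      omega
    have hpq : p = q := by
      have h2 : (insert v' p).erase v' = p := Finset.erase_insert hnp'
      rw [← hqe, hv'fq, Finset.erase_insert (hfnp q hq)] at h2
      exact h2.symm
    rw [hv'fq, hpq]
  · rw [canonF, dif_neg (fun h => hp h.1)]
    exact (hf0 p hp).symm

theorem analysis {V : Finset ℕ} {r : ℕ} {P : Finset (Finset ℕ)} {E : Finset (Finset ℕ)}
    (hr : r ∈ V) (hP : IsPartitionOf (V.erase r) P)
    (hE : HasPruferPartition V r E P) :
    (∀ p, p ∉ P → canonF V r P E p = 0) ∧ (∀ p ∈ P, canonF V r P E p ∈ V) ∧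
      (∃ D : ℕ → ℕ, D r = 0 ∧ ∀ p ∈ P, ∀ v ∈ p, D v = D (canonF V r P E p) + 1) ∧
      E = edgesOf (canonF V r P E) P := by
  obtain ⟨hT, m, hmarks, hPimg, hminj⟩ := hE
  obtain ⟨hHg, hConn, hcount⟩ := hT
  have hT' : IsHypertree V E := ⟨hHg, hConn, hcount⟩
  have hexist : ∀ v ∈ V, ∃ l, HJoined E l r v := fun v hv =>
    hjoined_of_rtg (hConn r hr v hv)
  have hedge : ∀ p ∈ P, ∃ e ∈ E, e.erase (m e) = p := by
    intro p hp
    rw [hPimg] at hp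
    exact Finset.mem_image.mp hp
  have hex : ∀ p ∈ P, ∃ v, v ∈ V ∧ v ∉ p ∧ insert v p ∈ E ∧
      ∀ w ∈ insert v p, hdist E r v ≤ hdist E r w := by
    intro p hp
    obtain ⟨e, he, hpe⟩ := hedge p hp
    obtain ⟨hme, hmin⟩ := hmarks e he
    have hins : insert (m e) p = e := by rw [← hpe]; exact Finset.insert_erase hme
    refine ⟨m e, (hHg e he).1 hme, ?_, ?_, ?_⟩
    · rw [← hpe]; exact Finset.notMem_erase _ _
    · rw [hins]; exact he
    · rw [hins]; exact hmin
  have huniq : ∀ p ∈ P, ∀ v1 v2,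
      (v1 ∈ V ∧ v1 ∉ p ∧ insert v1 p ∈ E ∧
        ∀ w ∈ insert v1 p, hdist E r v1 ≤ hdist E r w) →
      (v2 ∈ V ∧ v2 ∉ p ∧ insert v2 p ∈ E ∧
        ∀ w ∈ insert v2 p, hdist E r v2 ≤ hdist E r w) → v1 = v2 := by
    intro p hp v1 v2 ⟨hV1, hnp1, hE1, hmin1⟩ ⟨hV2, hnp2, hE2, hmin2⟩
    have hkey : ∀ v, v ∉ p → (hv : insert v p ∈ E) →
        (∀ w ∈ insert v p, hdist E r v ≤ hdist E r w) → v = m (insert v p) := by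
      intro v hnp hv hmin
      by_contra hne
      obtain ⟨hme, hmmin⟩ := hmarks _ hv
      exact unique_min hT' hr hv hme (Finset.mem_insert_self v p) (Ne.symm hne)
        hmmin hmin
    have h1 := hkey v1 hnp1 hE1 hmin1
    have h2 := hkey v2 hnp2 hE2 hmin2
    have he1 : (insert v1 p).erase (m (insert v1 p)) = p := by
      rw [← h1]; exact Finset.erase_insert hnp1
    have he2 : (insert v2 p).erase (m (insert v2 p)) = p := by
      rw [← h2]; exact Finset.erase_insert hnp2
    have heq : insert v1 p = insert v2 p :=
      hminj (Finset.mem_coe.mpr hE1) (Finset.mem_coe.mpr hE2) (he1.trans he2.symm)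
    have : v1 ∈ insert v2 p := heq ▸ Finset.mem_insert_self v1 p
    rcases Finset.mem_insert.mp this with h | h
    · exact h
    · exact absurd h hnp1
  have hcanon : ∀ p ∈ P, canonF V r P E p ∈ V ∧ canonF V r P E p ∉ p ∧
      insert (canonF V r P E p) p ∈ E ∧
      ∀ w ∈ insert (canonF V r P E p) p,
        hdist E r (canonF V r P E p) ≤ hdist E r w := by
    intro p hp
    have hfull : p ∈ P ∧ ∃ v, v ∈ V ∧ v ∉ p ∧ insert v p ∈ E ∧
        ∀ w ∈ insert v p, hdist E r v ≤ hdist E r w := ⟨hp, hex p hp⟩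
    rw [canonF, dif_pos hfull]
    exact hfull.2.choose_spec
  have hcm : ∀ e ∈ E, canonF V r P E (e.erase (m e)) = m e := by
    intro e he
    have hpP : e.erase (m e) ∈ P := by
      rw [hPimg]
      exact Finset.mem_image_of_mem _ he
    obtain ⟨hme, hmin⟩ := hmarks e he
    have hins : insert (m e) (e.erase (m e)) = e := Finset.insert_erase hme
    refine huniq _ hpP _ _ (hcanon _ hpP) ⟨(hHg e he).1 hme, Finset.notMem_erase _ _,
      by rw [hins]; exact he, by rw [hins]; exact hmin⟩
  refine ⟨?_, fun p hp => (hcanon p hp).1, ?_, ?_⟩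
  · intro p hp
    rw [canonF, dif_neg (fun h => hp h.1)]
  · refine ⟨hdist E r, hdist_self E r, ?_⟩
    intro p hp v hv
    obtain ⟨hcV, hcnp, hcE, hcmin⟩ := hcanon p hp
    obtain ⟨hme, hmmin⟩ := hmarks _ hcE
    have hceq : canonF V r P E p = m (insert (canonF V r P E p) p) := by
      by_contra hne
      exact unique_min hT' hr hcE hme (Finset.mem_insert_self _ _) (Ne.symm hne)
        hmmin hcmin
    have hvne : v ≠ m (insert (canonF V r P E p) p) := by
      rw [← hceq]
      intro h
      exact hcnp (h ▸ hv)
    have := plateau hT' hr hcE (hmarks _ hcE) (Finset.mem_insert_of_mem hv) hvne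
    rw [← hceq] at this
    exact this
  · ext e
    rw [edgesOf, Finset.mem_image]
    constructor
    · intro he
      refine ⟨e.erase (m e), ?_, ?_⟩
      · rw [hPimg]; exact Finset.mem_image_of_mem _ he
      · rw [hcm e he]
        exact Finset.insert_erase (hmarks e he).1
    · rintro ⟨p, hp, rfl⟩
      exact (hcanon p hp).2.2.1

theorem weight_eq {R : Type*} [CommSemiring R] (x : ℕ → R) {V : Finset ℕ} {r : ℕ}
    {P : Finset (Finset ℕ)} {f : Finset ℕ → ℕ}
    (hr : r ∈ V) (hP : IsPartitionOf (V.erase r) P)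
    (hfV : ∀ p ∈ P, f p ∈ V) (hfp : ∀ p ∈ P, f p ∉ p)
    (hinj : ∀ p ∈ P, ∀ q ∈ P, insert (f p) p = insert (f q) q → p = q) :
    ∏ v ∈ V, x v ^ (hdeg (edgesOf f P) v - 1)
      = x r ^ ((P.filter (fun p => f p = r)).card - 1) *
          ∏ v ∈ V.erase r, x v ^ (P.filter (fun p => f p = v)).card := by
  obtain ⟨hPne, hPdisj, hPba⟩ := hP
  set E := edgesOf f P with hE
  have hpVr : ∀ p ∈ P, p ⊆ V.erase r := by
    intro p hp v hv
    rw [← hPba]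
    exact Finset.mem_biUnion.mpr ⟨p, hp, hv⟩
  have hdeg_eq : ∀ v, hdeg E v = (P.filter (fun p => v ∈ insert (f p) p)).card := by
    intro v
    rw [hdeg]
    have himg : E.filter (fun e => v ∈ e)
        = (P.filter (fun p => v ∈ insert (f p) p)).image (fun p => insert (f p) p) := by
      ext e
      rw [Finset.mem_filter, Finset.mem_image, hE, edgesOf, Finset.mem_image]
      constructor
      · rintro ⟨⟨p, hp, rfl⟩, hve⟩
        exact ⟨p, Finset.mem_filter.mpr ⟨hp, hve⟩, rfl⟩
      · rintro ⟨p, hp, rfl⟩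
        obtain ⟨hpP, hvp⟩ := Finset.mem_filter.mp hp
        exact ⟨⟨p, hpP, rfl⟩, hvp⟩
    rw [himg, Finset.card_image_of_injOn]
    intro p hp q hq h
    exact hinj p (Finset.mem_filter.mp hp).1 q (Finset.mem_filter.mp hq).1 h
  have hdeg_r : hdeg E r = (P.filter (fun p => f p = r)).card := by
    rw [hdeg_eq r]
    congr 1
    apply Finset.filter_congr
    intro p hp
    simp only [Finset.mem_insert]
    constructor
    · rintro (h | h)
      · exact h.symm
      · exact ((Finset.mem_erase.mp (hpVr p hp h)).1 rfl).elim
    · intro h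
      exact Or.inl h.symm
  have hdeg_v : ∀ v ∈ V.erase r, hdeg E v = (P.filter (fun p => f p = v)).card + 1 := by
    intro v hv
    obtain ⟨q, hq, hvq⟩ := Finset.mem_biUnion.mp (hPba ▸ hv)
    rw [hdeg_eq v]
    have hqnm : q ∉ P.filter (fun p => f p = v) := by
      intro hmem
      obtain ⟨hqP, hfq⟩ := Finset.mem_filter.mp hmem
      exact hfp q hq (hfq ▸ hvq)
    have hset : P.filter (fun p => v ∈ insert (f p) p)
        = insert q (P.filter (fun p => f p = v)) := by
      ext p
      simp only [Finset.mem_filter, Finset.mem_insert]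
      constructor
      · rintro ⟨hpP, hvm | hvp⟩
        · exact Or.inr ⟨hpP, hvm.symm⟩
        · left
          by_contra hpq
          exact Finset.disjoint_left.mp (hPdisj p hpP q hq hpq) hvp hvq
      · rintro (rfl | ⟨hpP, hfv⟩)
        · exact ⟨hq, Or.inr hvq⟩
        · exact ⟨hpP, Or.inl hfv.symm⟩
    rw [hset, Finset.card_insert_of_notMem hqnm]
  rw [← Finset.mul_prod_erase V _ hr]
  congr 1
  · rw [hdeg_r]
  · refine Finset.prod_congr rfl fun v hv => ?_
    rw [hdeg_v v hv, Nat.add_sub_cancel]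

end PT

open scoped Classical in
/-- for a fixed vertex set `V = V' ∪ {r}` and a fixed partition
`P` of `V' = V \ {r}` into `k` non-empty parts,
`∑_T ∏_{v ∈ V} x_v ^ (deg_T v - 1) = (∑_{v ∈ V} x_v) ^ (k - 1)`, the sum
ranging over all `r`-rooted hypertrees with vertex set `V` and Prüfer
partition `P`. -/
theorem stmt18 (R : Type*) [CommSemiring R] (x : ℕ → R)
    (V : Finset ℕ) (r : ℕ) (hr : r ∈ V)
    (P : Finset (Finset ℕ)) (hP : IsPartitionOf (V.erase r) P) (k : ℕ)
    (hk : P.card = k) :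
    ∑ E ∈ V.powerset.powerset.filter (fun E => HasPruferPartition V r E P),
        ∏ v ∈ V, x v ^ (hdeg E v - 1) =
      (∑ v ∈ V, x v) ^ (k - 1) := by
  classical
  have hba : P.biUnion id = V.erase r := hP.2.2
  have h1 : ∀ p ∈ P, p.Nonempty := hP.1
  have h2 : ∀ p ∈ P, ∀ q ∈ P, p ≠ q → Disjoint p q := hP.2.1
  have hpVr : ∀ p ∈ P, p ⊆ V.erase r := by
    intro p hp v hv
    rw [← hba]
    exact Finset.mem_biUnion.mpr ⟨p, hp, hv⟩
  have h3 : ∀ p ∈ P, Disjoint p ({r} : Finset ℕ) := by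
    intro p hp
    rw [Finset.disjoint_singleton_right]
    intro hrp
    exact (Finset.mem_erase.mp (hpVr p hp hrp)).1 rfl
  have hstep1 : ∑ E ∈ V.powerset.powerset.filter (fun E => HasPruferPartition V r E P),
      ∏ v ∈ V, x v ^ (hdeg E v - 1)
      = ∑ f ∈ PT.filt {r} P,
          x r ^ ((P.filter (fun p => f p = r)).card - 1) *
            ∏ v ∈ V.erase r, x v ^ (P.filter (fun p => f p = v)).card := by
    refine Finset.sum_nbij' (PT.canonF V r P) (fun f => PT.edgesOf f P) ?_ ?_ ?_ ?_ ?_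
    · intro E hE
      obtain ⟨hEp, hEP⟩ := Finset.mem_filter.mp hE
      obtain ⟨h0, hV, hD, hEq⟩ := PT.analysis hr hP hEP
      rw [PT.filt, Finset.mem_filter, PT.mem_AsgFin]
      refine ⟨⟨h0, ?_⟩, ?_⟩
      · intro p hp
        rw [hba]
        have hvV := hV p hp
        by_cases hvr : PT.canonF V r P E p = r
        · exact Finset.mem_union_left _ (Finset.mem_singleton.mpr hvr)
        · exact Finset.mem_union_right _ (Finset.mem_erase.mpr ⟨hvr, hvV⟩)
      · obtain ⟨D, hD0, hDs⟩ := hD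
        exact ⟨D, fun v hv => by rw [Finset.mem_singleton.mp hv]; exact hD0, hDs⟩
    · intro f hf
      rw [PT.filt, Finset.mem_filter, PT.mem_AsgFin] at hf
      obtain ⟨⟨hf0, hfU⟩, D, hD0, hDs⟩ := hf
      have hfV : ∀ p ∈ P, f p ∈ V := by
        intro p hp
        rcases Finset.mem_union.mp (hfU p hp) with h | h
        · rw [Finset.mem_singleton.mp h]; exact hr
        · rw [hba] at h; exact Finset.mem_of_mem_erase h
      have hsyn := PT.synthesis hr hP hfV ⟨D, hD0 r (Finset.mem_singleton_self r), hDs⟩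
      rw [Finset.mem_filter, Finset.mem_powerset]
      refine ⟨?_, hsyn.1⟩
      intro e he
      rw [Finset.mem_powerset]
      exact (hsyn.1.1.1 e he).1
    · intro E hE
      obtain ⟨hEp, hEP⟩ := Finset.mem_filter.mp hE
      exact (PT.analysis hr hP hEP).2.2.2.symm
    · intro f hf
      rw [PT.filt, Finset.mem_filter, PT.mem_AsgFin] at hf
      obtain ⟨⟨hf0, hfU⟩, D, hD0, hDs⟩ := hf
      have hfV : ∀ p ∈ P, f p ∈ V := by
        intro p hp
        rcases Finset.mem_union.mp (hfU p hp) with h | h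
        · rw [Finset.mem_singleton.mp h]; exact hr
        · rw [hba] at h; exact Finset.mem_of_mem_erase h
      exact PT.canonF_edgesOf hr hP hf0 hfV ⟨D, hD0 r (Finset.mem_singleton_self r), hDs⟩
    · intro E hE
      obtain ⟨hEp, hEP⟩ := Finset.mem_filter.mp hE
      obtain ⟨h0, hV, hD, hEq⟩ := PT.analysis hr hP hEP
      obtain ⟨D, hD0, hDs⟩ := hD
      have hsyn := PT.synthesis hr hP hV ⟨D, hD0, hDs⟩
      conv_lhs => rw [hEq]
      exact PT.weight_eq x hr hP hV hsyn.2.2.2 hsyn.2.1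
  rw [hstep1, ← hk]
  clear hstep1 hk
  rcases Nat.eq_zero_or_pos P.card with hk0 | hkpos
  · have hP0 : P = ∅ := Finset.card_eq_zero.mp hk0
    subst hP0
    rw [hk0]
    have hfilt : PT.filt {r} ∅ = {fun _ => 0} := by
      ext f
      rw [PT.filt, Finset.mem_filter, PT.mem_AsgFin, Finset.mem_singleton]
      constructor
      · rintro ⟨⟨hf0, _⟩, _⟩
        funext p
        exact hf0 p (Finset.notMem_empty p)
      · rintro rfl
        refine ⟨⟨fun p _ => rfl, fun p hp => absurd hp (Finset.notMem_empty p)⟩,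
          fun _ => 0, fun v _ => rfl, fun p hp => absurd hp (Finset.notMem_empty p)⟩
    rw [hfilt, Finset.sum_singleton]
    simp
  · have hQne : P.Nonempty := Finset.card_pos.mp hkpos
    rw [PT.decomp {r} P hQne h1 h2 h3 (fun f =>
      x r ^ ((P.filter (fun p => f p = r)).card - 1) *
        ∏ v ∈ V.erase r, x v ^ (P.filter (fun p => f p = v)).card)]
    set w : Finset ℕ → R := fun p => ∑ v ∈ p, x v with hw
    have hYQ : ∀ S : Finset (Finset ℕ), S ⊆ P → ∑ v ∈ S.biUnion id, x v = ∑ p ∈ S, w p := by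
      intro S hSQ
      have hdisj : (↑S : Set (Finset ℕ)).PairwiseDisjoint (id : Finset ℕ → Finset ℕ) :=
        fun a ha b hb hab =>
          h2 a (hSQ (Finset.mem_coe.mp ha)) b (hSQ (Finset.mem_coe.mp hb)) hab
      rw [Finset.sum_biUnion hdisj]
      exact Finset.sum_congr rfl fun p _ => rfl
    have hmain : ∀ C ∈ P.powerset.filter (fun C => C.Nonempty),
        (∑ g ∈ PT.AsgFin C {r}, ∑ f' ∈ PT.filt (C.biUnion id) (P \ C),
          x r ^ ((P.filter (fun p => PT.merge C g f' p = r)).card - 1) *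
            ∏ v ∈ V.erase r, x v ^ (P.filter (fun p => PT.merge C g f' p = v)).card)
        = x r ^ (C.card - 1) *
            (if C = P then 1 else (∑ p ∈ C, w p) * (∑ p ∈ P, w p) ^ (P.card - C.card - 1)) := by
      intro C hC
      obtain ⟨hCQ', hCne⟩ := Finset.mem_filter.mp hC
      have hCQ : C ⊆ P := Finset.mem_powerset.mp hCQ'
      have hCcard : C.card ≤ P.card := Finset.card_le_card hCQ
      have hCpos : 1 ≤ C.card := Finset.card_pos.mpr hCne
      have hsingle : PT.AsgFin C {r} = {fun p => if p ∈ C then r else 0} := by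
        ext g
        rw [PT.mem_AsgFin, Finset.mem_singleton]
        constructor
        · rintro ⟨hg0, hgC⟩
          funext p
          by_cases hpC : p ∈ C
          · rw [if_pos hpC]
            exact Finset.mem_singleton.mp (hgC p hpC)
          · rw [if_neg hpC]
            exact hg0 p hpC
        · rintro rfl
          exact ⟨fun p hp => if_neg hp, fun p hp => by simp [hp]⟩
      rw [hsingle, Finset.sum_singleton]
      have hWm : ∀ f' ∈ PT.filt (C.biUnion id) (P \ C),
          x r ^ ((P.filter (fun p =>
              PT.merge C (fun p => if p ∈ C then r else 0) f' p = r)).card - 1) *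
            ∏ v ∈ V.erase r, x v ^ ((P.filter (fun p =>
              PT.merge C (fun p => if p ∈ C then r else 0) f' p = v)).card)
          = x r ^ (C.card - 1) * ∏ p ∈ P \ C, x (f' p) := by
        intro f' hf'
        rw [PT.filt, Finset.mem_filter, PT.mem_AsgFin] at hf'
        obtain ⟨⟨hf'0, hf'U⟩, _⟩ := hf'
        have hf'Vr : ∀ p ∈ P \ C, f' p ∈ V.erase r := by
          intro p hp
          rcases Finset.mem_union.mp (hf'U p hp) with h | h <;>
            obtain ⟨q, hq, hvq⟩ := Finset.mem_biUnion.mp h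
          · exact hpVr q (hCQ hq) hvq
          · exact hpVr q (Finset.mem_sdiff.mp hq).1 hvq
        have hCfilter : P.filter (fun p =>
            PT.merge C (fun p => if p ∈ C then r else 0) f' p = r) = C := by
          ext p
          rw [Finset.mem_filter, PT.merge]
          constructor
          · rintro ⟨hpP, hpr⟩
            by_contra hpC
            rw [if_neg hpC] at hpr
            have := hf'Vr p (Finset.mem_sdiff.mpr ⟨hpP, hpC⟩)
            rw [hpr] at this
            exact (Finset.mem_erase.mp this).1 rfl
          · intro hpC
            rw [if_pos hpC, if_pos hpC]
            exact ⟨hCQ hpC, rfl⟩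
        have hvfilter : ∀ v ∈ V.erase r, P.filter (fun p =>
            PT.merge C (fun p => if p ∈ C then r else 0) f' p = v)
            = (P \ C).filter (fun p => f' p = v) := by
          intro v hv
          have hvr : v ≠ r := (Finset.mem_erase.mp hv).1
          ext p
          rw [Finset.mem_filter, Finset.mem_filter, Finset.mem_sdiff, PT.merge]
          constructor
          · rintro ⟨hpP, hpv⟩
            by_cases hpC : p ∈ C
            · exfalso
              apply hvr
              rw [← hpv, if_pos hpC]
              simp [hpC]
            · rw [if_neg hpC] at hpv
              exact ⟨⟨hpP, hpC⟩, hpv⟩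
          · rintro ⟨⟨hpP, hpC⟩, hpv⟩
            rw [if_neg hpC]
            exact ⟨hpP, hpv⟩
        rw [hCfilter]
        congr 1
        have hfib : ∏ v ∈ V.erase r, ∏ p ∈ (P \ C).filter (fun p => f' p = v), x (f' p)
            = ∏ p ∈ P \ C, x (f' p) :=
          Finset.prod_fiberwise_of_maps_to hf'Vr _
        rw [← hfib]
        refine Finset.prod_congr rfl fun v hv => ?_
        rw [hvfilter v hv]
        calc x v ^ ((P \ C).filter (fun p => f' p = v)).card
            = ∏ p ∈ (P \ C).filter (fun p => f' p = v), x v :=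
              (Finset.prod_const _).symm
          _ = ∏ p ∈ (P \ C).filter (fun p => f' p = v), x (f' p) :=
              Finset.prod_congr rfl fun p hp => by
                rw [(Finset.mem_filter.mp hp).2]
      rw [Finset.sum_congr rfl hWm, ← Finset.mul_sum]
      congr 1
      have hsd : (P \ C).card = P.card - C.card := Finset.card_sdiff_of_subset hCQ
      have hIH := PT.master x ((P \ C).card) (P \ C) (C.biUnion id) rfl
        (fun p hp => h1 p (Finset.mem_sdiff.mp hp).1)
        (fun p hp q hq hpq =>
          h2 p (Finset.mem_sdiff.mp hp).1 q (Finset.mem_sdiff.mp hq).1 hpq)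
        (fun p hp => by
          apply Finset.disjoint_biUnion_right _ _ _ |>.mpr
          intro q hq
          exact h2 p (Finset.mem_sdiff.mp hp).1 q (hCQ hq)
            (fun h => (Finset.mem_sdiff.mp hp).2 (h ▸ hq)))
      rw [hIH]
      by_cases hCeq : C = P
      · rw [if_pos hCeq, if_pos (by rw [hsd, hCeq]; omega : (P \ C).card = 0)]
      · have hClt : C.card < P.card :=
          Finset.card_lt_card (Finset.ssubset_iff_subset_ne.mpr ⟨hCQ, hCeq⟩)
        rw [if_neg hCeq, if_neg (by omega : ¬ (P \ C).card = 0)]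
        have hU : C.biUnion id ∪ (P \ C).biUnion id = P.biUnion id := by
          ext v
          simp only [Finset.mem_union, Finset.mem_biUnion, id]
          constructor
          · rintro (⟨q, hq, hv⟩ | ⟨q, hq, hv⟩)
            · exact ⟨q, hCQ hq, hv⟩
            · exact ⟨q, (Finset.mem_sdiff.mp hq).1, hv⟩
          · rintro ⟨q, hq, hv⟩
            by_cases hqC : q ∈ C
            · exact Or.inl ⟨q, hqC, hv⟩
            · exact Or.inr ⟨q, Finset.mem_sdiff.mpr ⟨hq, hqC⟩, hv⟩
        rw [hU, hYQ C hCQ, hYQ P (subset_refl P), hsd]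
    rw [Finset.sum_congr rfl hmain, PT.alg P w (x r) P.card rfl hkpos]
    congr 1
    rw [← Finset.add_sum_erase V x hr, ← hba, hYQ P (subset_refl P)]
end
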